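/- arXiv:1605.06362 — 4 statements merged into one kernel-verified Lean document; each statement's English description precedes it below -/
import Mathlib

section
/- Let C ⊂ ℝⁿ be a compact set, N ∈ ℕ₀, and let p ≠ 0 be a polynomial on ℝⁿ of degree at most N such that K := C ∩ {x : p(x) ≥ 0} is a convex body. Then K is uniquely determined among all convex bodies contained in C by its geometric moments of order at most N: if L is any convex body with L ⊂ C and μ_α(L) = μ_α(K) for all multi-indices α ∈ ℕ₀ⁿ with |α| ≤ N, then L = K. -/
open MeasureTheory

/-- The geometric moment `μ_α(K) = ∫_K x^α dx` of a set `K ⊆ ℝⁿ`. -/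
noncomputable def geomMoment {n : ℕ} (α : Fin n → ℕ) (K : Set (EuclideanSpace ℝ (Fin n))) : ℝ :=
  ∫ x in K, ∏ i, (x i) ^ (α i)

/-- A convex body: a compact convex set with nonempty interior. -/
def IsConvexBody {n : ℕ} (K : Set (EuclideanSpace ℝ (Fin n))) : Prop :=
  IsCompact K ∧ Convex ℝ K ∧ (interior K).Nonempty

/-- A convex set with nonempty interior is contained in the closure of its interior. -/
lemma convex_subset_closure_interior {E : Type*} [NormedAddCommGroup E] [NormedSpace ℝ E]
    {s : Set E} (hs : Convex ℝ s) (hne : (interior s).Nonempty) :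
    s ⊆ closure (interior s) := by
  obtain ⟨y, hy⟩ := hne
  intro x hx
  have hNB : (nhdsWithin (0 : ℝ) (Set.Ioc (0 : ℝ) 1)).NeBot := by
    rw [← mem_closure_iff_nhdsWithin_neBot, closure_Ioc one_ne_zero.symm]
    exact ⟨le_rfl, zero_le_one⟩
  have htend : Filter.Tendsto (fun t : ℝ => x + t • (y - x))
      (nhdsWithin (0 : ℝ) (Set.Ioc (0 : ℝ) 1)) (nhds x) := by
    have : Filter.Tendsto (fun t : ℝ => x + t • (y - x)) (nhds 0) (nhds (x + (0 : ℝ) • (y - x))) := by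
      exact Filter.Tendsto.const_add _ ((continuous_id.smul continuous_const).tendsto 0)
    simpa using this.mono_left nhdsWithin_le_nhds
  refine mem_closure_of_tendsto htend ?_
  filter_upwards [self_mem_nhdsWithin] with t ht
  exact hs.add_smul_sub_mem_interior hx hy ht

lemma convex_body_eq_of_subset_of_null_diff {n : ℕ} {A B : Set (EuclideanSpace ℝ (Fin n))}
    (hA : IsConvexBody A) (hB : IsCompact B)
    (hnull : volume (A \ B) = 0) : A ⊆ B := by
  have hsub : interior A ⊆ B := by
    by_contra h
    obtain ⟨y, hyA, hyB⟩ := Set.not_subset.mp h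
    have hopen : IsOpen (interior A \ B) := (isOpen_interior).sdiff hB.isClosed
    have hpos : 0 < volume (interior A \ B) :=
      hopen.measure_pos volume ⟨y, hyA, hyB⟩
    have : volume (interior A \ B) = 0 :=
      measure_mono_null (Set.diff_subset_diff_left interior_subset) hnull
    simp [this] at hpos
  calc A ⊆ closure (interior A) := convex_subset_closure_interior hA.2.1 hA.2.2
    _ ⊆ closure B := closure_mono hsub
    _ = B := hB.isClosed.closure_eq

/-- If `K = C ∩ {p ≥ 0}` for a compact set `C` and a nonzero polynomial `p`
of degree at most `N`, and `K` is a convex body, then `K` is uniquely determined among all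
convex bodies contained in `C` by its geometric moments of order at most `N`. -/
theorem uniqueness_of_semialgebraic_body {n : ℕ} (C : Set (EuclideanSpace ℝ (Fin n)))
    (hC : IsCompact C) (N : ℕ) (p : MvPolynomial (Fin n) ℝ) (hp : p ≠ 0)
    (hdeg : p.totalDegree ≤ N) (K : Set (EuclideanSpace ℝ (Fin n)))
    (hKdef : K = C ∩ {x | 0 ≤ MvPolynomial.eval (fun i => x i) p})
    (hK : IsConvexBody K)
    (L : Set (EuclideanSpace ℝ (Fin n))) (hL : IsConvexBody L) (hLC : L ⊆ C)
    (hmom : ∀ α : Fin n → ℕ, (∑ i, α i) ≤ N → geomMoment α L = geomMoment α K) :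
    L = K := by
  set f : EuclideanSpace ℝ (Fin n) → ℝ := fun x => MvPolynomial.eval (fun i => x i) p with hf
  have hfc : Continuous f := by
    have : Continuous fun x : EuclideanSpace ℝ (Fin n) => (fun i => x i) := by
      continuity
    exact (p.continuous_eval).comp this
  have hKm : MeasurableSet K := hK.1.measurableSet
  have hLm : MeasurableSet L := hL.1.measurableSet
  -- f ≥ 0 on K, f < 0 on L \ K
  have hfK : ∀ x ∈ K, 0 ≤ f x := fun x hx => (hKdef ▸ hx).2
  have hfLK : ∀ x ∈ L \ K, f x < 0 := by
    rintro x ⟨hxL, hxK⟩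
    by_contra h
    exact hxK (hKdef ▸ ⟨hLC hxL, not_lt.mp h⟩)
  -- integrability
  have hIK : IntegrableOn f K := hfc.continuousOn.integrableOn_compact hK.1
  have hIL : IntegrableOn f L := hfc.continuousOn.integrableOn_compact hL.1
  -- equal integrals of f over K and L via moments
  have hint : ∫ x in L, f x = ∫ x in K, f x := by
    have hrw : ∀ S : Set (EuclideanSpace ℝ (Fin n)), IsCompact S →
        ∫ x in S, f x = ∑ d ∈ p.support, MvPolynomial.coeff d p * geomMoment (fun i => d i) S := by
      intro S hS
      have h1 : ∫ x in S, f x =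
          ∫ x in S, ∑ d ∈ p.support, MvPolynomial.coeff d p * ∏ i, (x i) ^ (d i) := by
        refine setIntegral_congr_fun hS.measurableSet (fun x _ => ?_)
        exact MvPolynomial.eval_eq' (fun i => x i) p
      rw [h1, integral_finset_sum]
      · refine Finset.sum_congr rfl fun d _ => ?_
        rw [geomMoment, ← integral_const_mul]
      · intro d _
        have : ContinuousOn (fun x : EuclideanSpace ℝ (Fin n) =>
            MvPolynomial.coeff d p * ∏ i, (x i) ^ (d i)) S := by
          refine ContinuousOn.mul continuousOn_const ?_
          exact continuousOn_finset_prod _ fun i _ =>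
            ((continuous_apply i).comp (by continuity : Continuous fun x : EuclideanSpace ℝ (Fin n) => (fun j => x j))).continuousOn.pow _
        exact this.integrableOn_compact hS
    rw [hrw L hL.1, hrw K hK.1]
    refine Finset.sum_congr rfl fun d hd => ?_
    have hdN : (∑ i, d i) ≤ N := by
      have := MvPolynomial.le_totalDegree hd
      rw [Finsupp.sum_fintype _ _ (fun _ => rfl)] at this
      exact this.trans hdeg
    rw [hmom _ hdN]
  -- split integrals
  have hsplitK := integral_inter_add_diff (f := f) (s := K) hLm hIK
  have hsplitL := integral_inter_add_diff (f := f) (s := L) hKm hIL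
  have hdiffeq : ∫ x in L \ K, f x = ∫ x in K \ L, f x := by
    have : K ∩ L = L ∩ K := Set.inter_comm K L
    rw [this] at hsplitK
    linarith [hsplitK, hsplitL, hint]
  have hKLnonneg : 0 ≤ ∫ x in K \ L, f x :=
    setIntegral_nonneg (hKm.diff hLm) (fun x hx => hfK x hx.1)
  -- volume of L \ K is zero
  have hnullLK : volume (L \ K) = 0 := by
    by_contra hne
    have hms : MeasurableSet (L \ K) := hLm.diff hKm
    have hIg : IntegrableOn (fun x => -f x) (L \ K) :=
      (hIL.mono_set Set.diff_subset).neg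
    have hnn : 0 ≤ᶠ[ae (volume.restrict (L \ K))] fun x => -f x := by
      filter_upwards [ae_restrict_mem hms] with x hx
      exact le_of_lt (neg_pos.mpr (hfLK x hx))
    have hpos : 0 < ∫ x in L \ K, -f x := by
      rw [setIntegral_pos_iff_support_of_nonneg_ae hnn hIg]
      have hsub : L \ K ⊆ Function.support (fun x => -f x) := fun x hx =>
        ne_of_gt (neg_pos.mpr (hfLK x hx))
      have : Function.support (fun x => -f x) ∩ (L \ K) = L \ K :=
        Set.inter_eq_self_of_subset_right hsub
      rw [this]
      exact (measure_pos_of_superset (Set.Subset.refl _) hne)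
    rw [integral_neg] at hpos
    linarith [hdiffeq ▸ hKLnonneg]
  -- hence L ⊆ K
  have hLK : L ⊆ K := convex_body_eq_of_subset_of_null_diff hL hK.1 hnullLK
  -- equal volumes from the zeroth moment
  have hvol : volume L = volume K := by
    have h0 := hmom (fun _ => 0) (by simp)
    simp only [geomMoment, pow_zero, Finset.prod_const_one] at h0
    rw [MeasureTheory.setIntegral_const, MeasureTheory.setIntegral_const, smul_eq_mul, smul_eq_mul,
      mul_one, mul_one] at h0
    have hKfin : volume K ≠ ⊤ := hK.1.measure_ne_top
    have hLfin : volume L ≠ ⊤ := hL.1.measure_ne_top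
    exact (ENNReal.toReal_eq_toReal_iff' hLfin hKfin).mp h0
  have hnullKL : volume (K \ L) = 0 := by
    rw [measure_diff hLK hLm.nullMeasurableSet hL.1.measure_ne_top, hvol, tsub_self]
  exact (hLK.antisymm (convex_body_eq_of_subset_of_null_diff hK hL.1 hnullKL))
end

section
/- Every ellipsoid in ℝⁿ (the image of the closed Euclidean unit ball under an invertible affine map) is uniquely determined among all convex bodies in ℝⁿ by its geometric moments of order at most 2: if E is an ellipsoid and L is a convex body with μ_α(L) = μ_α(E) for all multi-indices α with |α| ≤ 2, then L = E. -/
open MeasureTheory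

/-- An ellipsoid: the image of the closed Euclidean unit ball under an invertible affine map. -/
def IsEllipsoid {n : ℕ} (E : Set (EuclideanSpace ℝ (Fin n))) : Prop :=
  ∃ A : EuclideanSpace ℝ (Fin n) ≃ᵃ[ℝ] EuclideanSpace ℝ (Fin n),
    E = A '' Metric.closedBall 0 1

section Aux

variable {n : ℕ}

lemma aux_subset_closure_interior {s : Set (EuclideanSpace ℝ (Fin n))}
    (hs : Convex ℝ s) (h : (interior s).Nonempty) : s ⊆ closure (interior s) := by
  obtain ⟨x₀, hx₀⟩ := h
  intro y hy
  have h0 : Filter.Tendsto (fun k : ℕ => (1 : ℝ) / (k + 1)) Filter.atTop (nhds 0) :=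
    tendsto_one_div_add_atTop_nhds_zero_nat
  have htend : Filter.Tendsto
      (fun k : ℕ => ((1 : ℝ) / (k + 1)) • x₀ + (1 - (1 : ℝ) / (k + 1)) • y)
      Filter.atTop (nhds y) := by
    have h1 : Filter.Tendsto (fun k : ℕ => (1 : ℝ) - 1 / (k + 1)) Filter.atTop (nhds (1 - 0)) :=
      (tendsto_const_nhds (x := (1:ℝ))).sub h0
    have := (h0.smul_const x₀).add (h1.smul_const y)
    simpa using this
  refine mem_closure_of_tendsto htend (Filter.Eventually.of_forall fun k => ?_)
  refine hs.combo_interior_self_mem_interior hx₀ hy (by positivity) ?_ (by ring)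
  have hk : (1 : ℝ) / (k + 1) ≤ 1 := by
    rw [div_le_one (by positivity)]
    linarith [Nat.cast_nonneg (α := ℝ) k]
  linarith

lemma aux_subset_of_diff_null {K M : Set (EuclideanSpace ℝ (Fin n))}
    (hKconv : Convex ℝ K) (hKcl : IsClosed K) (hKint : (interior K).Nonempty)
    (hMcl : IsClosed M) (hnull : volume (K \ M) = 0) : K ⊆ M := by
  have hint : interior K ⊆ M := by
    intro x hx
    by_contra hxM
    obtain ⟨r, hr, hball⟩ := Metric.isOpen_iff.mp
      (isOpen_interior.inter hMcl.isOpen_compl) x ⟨hx, hxM⟩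
    have hsub : Metric.ball x r ⊆ K \ M :=
      hball.trans (fun y hy => ⟨interior_subset hy.1, hy.2⟩)
    have hle : volume (Metric.ball x r) ≤ volume (K \ M) := measure_mono hsub
    rw [hnull, le_zero_iff] at hle
    exact (Metric.measure_ball_pos volume x hr).ne' hle
  intro y hy
  have := closure_mono hint (aux_subset_closure_interior hKconv hKint hy)
  rwa [hMcl.closure_eq] at this

lemma aux_contApply (i : Fin n) : Continuous (fun x : EuclideanSpace ℝ (Fin n) => x i) :=
  (continuous_apply i).comp (PiLp.continuous_ofLp 2 _)

lemma aux_integrableOn_compact {K : Set (EuclideanSpace ℝ (Fin n))} (hK : IsCompact K)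
    {g : EuclideanSpace ℝ (Fin n) → ℝ} (hg : Continuous g) : IntegrableOn g K volume :=
  hg.continuousOn.integrableOn_compact hK

lemma aux_quad_eq {L E : Set (EuclideanSpace ℝ (Fin n))} (hLc : IsCompact L) (hEc : IsCompact E)
    (h0 : (∫ x in L, (1:ℝ)) = ∫ x in E, (1:ℝ))
    (h1 : ∀ i, (∫ x in L, x i) = ∫ x in E, x i)
    (h2 : ∀ i k, (∫ x in L, x i * x k) = ∫ x in E, x i * x k)
    (c : ℝ) (a : Fin n → ℝ) :
    (∫ x in L, (c + ∑ i, a i * x i)^2) = ∫ x in E, (c + ∑ i, a i * x i)^2 := by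
  have expand : ∀ x : EuclideanSpace ℝ (Fin n), (c + ∑ i, a i * x i)^2
      = c^2 * 1 + ((∑ i, (2*c*a i) * x i) + ∑ i, ∑ k, (a i * a k) * (x i * x k)) := by
    intro x
    have hS2 : (∑ i, a i * x i) * (∑ k, a k * x k) = ∑ i, ∑ k, (a i * a k) * (x i * x k) := by
      rw [Finset.sum_mul_sum]
      refine Finset.sum_congr rfl fun i _ => Finset.sum_congr rfl fun k _ => by ring
    have h2c : 2*c*(∑ i, a i * x i) = ∑ i, (2*c*a i) * x i := by
      rw [Finset.mul_sum]
      refine Finset.sum_congr rfl fun i _ => by ring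
    calc (c + ∑ i, a i * x i)^2
        = c^2 * 1 + (2*c*(∑ i, a i * x i) + (∑ i, a i * x i) * (∑ k, a k * x k)) := by ring
      _ = _ := by rw [hS2, h2c]
  have comp : ∀ (K : Set (EuclideanSpace ℝ (Fin n))), IsCompact K →
      (∫ x in K, (c + ∑ i, a i * x i)^2)
      = c^2 * (∫ x in K, (1:ℝ)) + ((∑ i, (2*c*a i) * ∫ x in K, x i)
        + ∑ i, ∑ k, (a i * a k) * ∫ x in K, x i * x k) := by
    intro K hK
    have hconst : Continuous (fun _ : EuclideanSpace ℝ (Fin n) => c^2 * 1) := continuous_const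
    have hlin : Continuous (fun x : EuclideanSpace ℝ (Fin n) => ∑ i, (2*c*a i) * x i) :=
      continuous_finset_sum _ fun i _ => continuous_const.mul (aux_contApply i)
    have hquad : Continuous
        (fun x : EuclideanSpace ℝ (Fin n) => ∑ i, ∑ k, (a i * a k) * (x i * x k)) :=
      continuous_finset_sum _ fun i _ => continuous_finset_sum _ fun k _ =>
        continuous_const.mul ((aux_contApply i).mul (aux_contApply k))
    simp_rw [expand]
    rw [integral_add (aux_integrableOn_compact hK hconst)
        (aux_integrableOn_compact hK
          (g := fun x => ∑ i, (2*c*a i) * x i + ∑ i, ∑ k, (a i * a k) * (x i * x k)) (hlin.add hquad)),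
      integral_add (aux_integrableOn_compact hK hlin) (aux_integrableOn_compact hK hquad),
      integral_finset_sum _ (fun i _ => aux_integrableOn_compact hK (g := fun x => (2*c*a i) * x i)
        (continuous_const.mul (aux_contApply i))),
      integral_finset_sum _ (fun i _ => aux_integrableOn_compact hK
        (g := fun x => ∑ k, (a i * a k) * (x i * x k)) (continuous_finset_sum _ fun k _ =>
          continuous_const.mul ((aux_contApply i).mul (aux_contApply k))))]
    congr 1
    · simp [integral_const, mul_comm]
    congr 1
    · exact Finset.sum_congr rfl fun i _ => integral_const_mul _ _
    · refine Finset.sum_congr rfl fun i _ => ?_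
      rw [integral_finset_sum _ (fun k _ => aux_integrableOn_compact hK (g := fun x => (a i * a k) * (x i * x k))
        (continuous_const.mul ((aux_contApply i).mul (aux_contApply k))))]
      exact Finset.sum_congr rfl fun k _ => integral_const_mul _ _
  rw [comp L hLc, comp E hEc, h0]
  congr 1
  congr 1
  · exact Finset.sum_congr rfl fun i _ => by rw [h1 i]
  · exact Finset.sum_congr rfl fun i _ => Finset.sum_congr rfl fun k _ => by rw [h2 i k]

lemma aux_prod_pow_ite (x : EuclideanSpace ℝ (Fin n)) (i : Fin n) :
    (∏ m, (x m) ^ (if m = i then 1 else 0)) = x i := by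
  rw [Finset.prod_eq_single i (fun m _ hm => by simp [hm])
    (fun h => absurd (Finset.mem_univ i) h)]
  simp

lemma aux_prod_pow_ite2 (x : EuclideanSpace ℝ (Fin n)) (i k : Fin n) :
    (∏ m, (x m) ^ ((if m = i then 1 else 0) + (if m = k then 1 else 0))) = x i * x k := by
  simp_rw [pow_add]
  rw [Finset.prod_mul_distrib, aux_prod_pow_ite, aux_prod_pow_ite]

lemma aux_norm_sq (y : EuclideanSpace ℝ (Fin n)) : ‖y‖^2 = ∑ j, (y j)^2 := by
  rw [EuclideanSpace.norm_eq, Real.sq_sqrt (by positivity)]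
  refine Finset.sum_congr rfl fun j _ => by rw [Real.norm_eq_abs, sq_abs]

end Aux


/-- An ellipsoid is uniquely determined among all convex bodies in `ℝⁿ`
by its geometric moments of order at most 2. -/
theorem ellipsoid_determined_by_moments_up_to_two {n : ℕ}
    (E : Set (EuclideanSpace ℝ (Fin n))) (hE : IsEllipsoid E)
    (L : Set (EuclideanSpace ℝ (Fin n))) (hL : IsConvexBody L)
    (hmom : ∀ α : Fin n → ℕ, (∑ i, α i) ≤ 2 → geomMoment α L = geomMoment α E) :
    L = E := by
  classical
  obtain ⟨A, hEA⟩ := hE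
  have hcL : IsCompact L := hL.1
  have hAcoe : ⇑A.toHomeomorphOfFiniteDimensional = ⇑A :=
    A.coe_toHomeomorphOfFiniteDimensional
  have hcE : IsCompact E := by
    rw [hEA, ← hAcoe]
    exact (isCompact_closedBall _ _).image A.toHomeomorphOfFiniteDimensional.continuous
  have convE : Convex ℝ E := by
    rw [hEA]
    have := (convex_closedBall (0 : EuclideanSpace ℝ (Fin n)) 1).affine_image A.toAffineMap
    simpa using this
  -- moments of order ≤ 2
  have h0 : (∫ x in L, (1:ℝ)) = ∫ x in E, (1:ℝ) := by
    have h := hmom (fun _ => 0) (by simp)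
    simpa [geomMoment] using h
  have h1 : ∀ i, (∫ x in L, x i) = ∫ x in E, x i := by
    intro i
    have h := hmom (fun m => if m = i then 1 else 0) (by simp)
    simpa only [geomMoment, aux_prod_pow_ite] using h
  have h2 : ∀ i k, (∫ x in L, x i * x k) = ∫ x in E, x i * x k := by
    intro i k
    have h := hmom (fun m => (if m = i then 1 else 0) + (if m = k then 1 else 0))
      (by simp [Finset.sum_add_distrib])
    simpa only [geomMoment, aux_prod_pow_ite2] using h
  -- the quadratic function G x = ‖A.symm x‖²
  set c : Fin n → ℝ := fun j => (A.symm 0) j with hc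
  set a : Fin n → Fin n → ℝ :=
    fun j i => (A.symm.linear (EuclideanSpace.single i (1:ℝ))) j with ha
  set G : EuclideanSpace ℝ (Fin n) → ℝ :=
    fun x => ∑ j, (c j + ∑ i, a j i * x i)^2 with hG
  have hGcont : Continuous G :=
    continuous_finset_sum _ fun j _ =>
      (continuous_const.add (continuous_finset_sum _ fun i _ =>
        continuous_const.mul (aux_contApply i))).pow 2
  have hGF : ∀ x, G x = ‖A.symm x‖^2 := by
    intro x
    have hAsx : A.symm x = A.symm.linear x + A.symm 0 := by
      have h := (A.symm : EuclideanSpace ℝ (Fin n) →ᵃ[ℝ] EuclideanSpace ℝ (Fin n)).map_vadd 0 x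
      simpa [vadd_eq_add] using h
    have hlinco : ∀ j, (A.symm.linear x) j = ∑ i, a j i * x i := by
      intro j
      have hx : (∑ i, x i • EuclideanSpace.single i (1:ℝ)) = x := by
        have h := (EuclideanSpace.basisFun (Fin n) ℝ).sum_repr x
        simpa [EuclideanSpace.basisFun_apply, EuclideanSpace.basisFun_repr] using h
      conv_lhs => rw [← hx]
      rw [map_sum]
      rw [WithLp.ofLp_sum, Finset.sum_apply]
      refine Finset.sum_congr rfl fun i _ => ?_
      rw [show A.symm.linear (x i • EuclideanSpace.single i (1:ℝ))
          = x i • A.symm.linear (EuclideanSpace.single i (1:ℝ)) from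
        A.symm.linear.map_smul _ _]
      simp [ha, smul_eq_mul, mul_comm]
    rw [aux_norm_sq]
    refine (Finset.sum_congr rfl fun j _ => ?_).symm
    rw [hAsx]
    have : (A.symm.linear x + A.symm 0) j = (A.symm.linear x) j + (A.symm 0) j := rfl
    rw [this, hlinco j]
    ring
  -- integrals of G agree
  have hGLE : (∫ x in L, G x) = ∫ x in E, G x := by
    rw [hG]
    rw [integral_finset_sum _ (fun j _ => aux_integrableOn_compact hcL (g := fun x => (c j + ∑ i, a j i * x i)^2)
        ((continuous_const.add (continuous_finset_sum _ fun i _ =>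
          continuous_const.mul (aux_contApply i))).pow 2)),
      integral_finset_sum _ (fun j _ => aux_integrableOn_compact hcE (g := fun x => (c j + ∑ i, a j i * x i)^2)
        ((continuous_const.add (continuous_finset_sum _ fun i _ =>
          continuous_const.mul (aux_contApply i))).pow 2))]
    exact Finset.sum_congr rfl fun j _ => aux_quad_eq hcL hcE h0 h1 h2 (c j) (a j)
  -- membership and bounds
  have hmemE : ∀ x, x ∈ E ↔ ‖A.symm x‖ ≤ 1 := by
    intro x
    rw [hEA]
    constructor
    · rintro ⟨y, hy, rfl⟩
      rw [A.symm_apply_apply]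
      exact mem_closedBall_zero_iff.mp hy
    · intro h
      exact ⟨A.symm x, mem_closedBall_zero_iff.mpr h, A.apply_symm_apply x⟩
  have hle : ∀ x ∈ E, G x ≤ 1 := by
    intro x hx
    rw [hGF]
    have h := (hmemE x).mp hx
    nlinarith [norm_nonneg (A.symm x)]
  have hgt : ∀ x, x ∉ E → 1 < G x := by
    intro x hx
    rw [hGF]
    have h : 1 < ‖A.symm x‖ := lt_of_not_ge fun hh => hx ((hmemE x).mpr hh)
    nlinarith
  -- interior and frontier of E
  have hintE : interior E = ⇑A '' Metric.ball 0 1 := by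
    rw [hEA, ← hAcoe, ← A.toHomeomorphOfFiniteDimensional.image_interior,
      interior_closedBall (0 : EuclideanSpace ℝ (Fin n)) one_ne_zero]
  have hfrontier : ∀ x ∈ E, G x = 1 → x ∈ frontier E := by
    intro x hxE hGx
    have hnorm : ‖A.symm x‖ = 1 := by
      have h2 : ‖A.symm x‖^2 = 1 := by rw [← hGF x]; exact hGx
      calc ‖A.symm x‖ = Real.sqrt (‖A.symm x‖^2) := (Real.sqrt_sq (norm_nonneg _)).symm
        _ = 1 := by rw [h2, Real.sqrt_one]
    rw [hcE.isClosed.frontier_eq]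
    refine ⟨hxE, fun hxint => ?_⟩
    rw [hintE] at hxint
    obtain ⟨y, hy, rfl⟩ := hxint
    rw [A.symm_apply_apply] at hnorm
    have : ‖y‖ < 1 := mem_ball_zero_iff.mp hy
    linarith
  have hfrontier_null : volume (frontier E) = 0 := convE.addHaar_frontier volume
  -- measurability and integrability
  have hmL : MeasurableSet L := hcL.isClosed.measurableSet
  have hmE : MeasurableSet E := hcE.isClosed.measurableSet
  have hGL : IntegrableOn G L volume := aux_integrableOn_compact hcL hGcont
  have hGE : IntegrableOn G E volume := aux_integrableOn_compact hcE hGcont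
  have h1L : IntegrableOn (fun _ => (1:ℝ)) L volume :=
    aux_integrableOn_compact hcL continuous_const
  have h1E : IntegrableOn (fun _ => (1:ℝ)) E volume :=
    aux_integrableOn_compact hcE continuous_const
  -- splitting off intersections
  have hsplit : ∀ (K M : Set (EuclideanSpace ℝ (Fin n))), MeasurableSet M →
      MeasurableSet K →
      ∀ g : EuclideanSpace ℝ (Fin n) → ℝ, IntegrableOn g K volume →
      (∫ x in K, g x) = (∫ x in K \ M, g x) + ∫ x in K ∩ M, g x := by
    intro K M hM hK g hg
    have hu : K \ M ∪ K ∩ M = K := Set.diff_union_inter K M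
    calc (∫ x in K, g x) = ∫ x in (K \ M) ∪ (K ∩ M), g x := by rw [hu]
      _ = _ := setIntegral_union Set.disjoint_sdiff_inter (hK.inter hM)
          (hg.mono_set Set.diff_subset) (hg.mono_set Set.inter_subset_left)
  have hLsplitG := hsplit L E hmE hmL G hGL
  have hEsplitG := hsplit E L hmL hmE G hGE
  have hLsplit1 := hsplit L E hmE hmL _ h1L
  have hEsplit1 := hsplit E L hmL hmE _ h1E
  have hicomm : L ∩ E = E ∩ L := Set.inter_comm L E
  have haG : (∫ x in L \ E, G x) = ∫ x in E \ L, G x := by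
    have h := hGLE
    rw [hLsplitG, hEsplitG, hicomm] at h
    linarith
  have ha1 : (∫ x in L \ E, (1:ℝ)) = ∫ x in E \ L, (1:ℝ) := by
    have h := h0
    rw [hLsplit1, hEsplit1, hicomm] at h
    linarith
  have hIL : (∫ x in L \ E, (G x - 1)) = (∫ x in L \ E, G x) - ∫ x in L \ E, (1:ℝ) :=
    integral_sub (hGL.mono_set Set.diff_subset) (h1L.mono_set Set.diff_subset)
  have hIE : (∫ x in E \ L, ((1:ℝ) - G x)) = (∫ x in E \ L, (1:ℝ)) - ∫ x in E \ L, G x :=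
    integral_sub (h1E.mono_set Set.diff_subset) (hGE.mono_set Set.diff_subset)
  have hILnn : 0 ≤ ∫ x in L \ E, (G x - 1) :=
    setIntegral_nonneg (hmL.diff hmE) fun x hx => sub_nonneg.mpr (le_of_lt (hgt x hx.2))
  have hIEnn : 0 ≤ ∫ x in E \ L, ((1:ℝ) - G x) :=
    setIntegral_nonneg (hmE.diff hmL) fun x hx => sub_nonneg.mpr (hle x hx.1)
  have hsum : (∫ x in L \ E, (G x - 1)) + ∫ x in E \ L, ((1:ℝ) - G x) = 0 := by
    rw [hIL, hIE]
    linarith [haG, ha1]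
  have hIL0 : (∫ x in L \ E, (G x - 1)) = 0 := by linarith
  have hIE0 : (∫ x in E \ L, ((1:ℝ) - G x)) = 0 := by linarith
  have hLE_null : volume (L \ E) = 0 := by
    have hnn : 0 ≤ᵐ[volume.restrict (L \ E)] fun x => G x - 1 :=
      (ae_restrict_iff' (hmL.diff hmE)).mpr (Filter.Eventually.of_forall
        fun x hx => sub_nonneg.mpr (le_of_lt (hgt x hx.2)))
    have hzero := (setIntegral_eq_zero_iff_of_nonneg_ae hnn
      ((hGL.mono_set Set.diff_subset).sub (h1L.mono_set Set.diff_subset))).mp hIL0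
    have hae := (ae_restrict_iff' (hmL.diff hmE)).mp hzero
    rw [measure_eq_zero_iff_ae_notMem]
    filter_upwards [hae] with x hx hmem
    have hx1 := hx hmem
    have hx2 := hgt x hmem.2
    simp only [Pi.zero_apply] at hx1
    linarith
  have hEL_null : volume (E \ L) = 0 := by
    have hnn : 0 ≤ᵐ[volume.restrict (E \ L)] fun x => (1:ℝ) - G x :=
      (ae_restrict_iff' (hmE.diff hmL)).mpr (Filter.Eventually.of_forall
        fun x hx => sub_nonneg.mpr (hle x hx.1))
    have hzero := (setIntegral_eq_zero_iff_of_nonneg_ae hnn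
      ((h1E.mono_set Set.diff_subset).sub (hGE.mono_set Set.diff_subset))).mp hIE0
    have hae := (ae_restrict_iff' (hmE.diff hmL)).mp hzero
    have hfr : ∀ᵐ x, x ∉ frontier E := measure_eq_zero_iff_ae_notMem.mp hfrontier_null
    rw [measure_eq_zero_iff_ae_notMem]
    filter_upwards [hae, hfr] with x hx hxf hmem
    apply hxf
    refine hfrontier x hmem.1 ?_
    have hx1 := hx hmem
    simp only [Pi.zero_apply] at hx1
    linarith
  refine Set.Subset.antisymm
    (aux_subset_of_diff_null hL.2.1 hcL.isClosed hL.2.2 hcE.isClosed hLE_null)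
    (aux_subset_of_diff_null convE hcE.isClosed ?_ hcL.isClosed hEL_null)
  rw [hintE]
  exact ⟨A 0, 0, Metric.mem_ball_self one_pos, rfl⟩
end

section
/- Let K and C be convex bodies in ℝⁿ with K contained in the interior of C. For every ε > 0 there exist m ∈ ℕ and a convex body K_m ⊂ C such that (i) K_m is uniquely determined among all convex bodies contained in C by its geometric moments of order at most m (any convex body L ⊂ C with μ_α(L) = μ_α(K_m) for all |α| ≤ m equals K_m), and (ii) the Hausdorff distance between K and K_m is at most ε. -/
open MeasureTheory

section AuxProof
open Set Metric

-- L1: null difference gives subset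
lemma aux_subset_of_null_diff {n : ℕ} {A B : Set (EuclideanSpace ℝ (Fin n))}
    (hAconv : Convex ℝ A) (hAcl : IsClosed A) (hAint : (interior A).Nonempty)
    (hBcl : IsClosed B) (h : volume (A \ B) = 0) : A ⊆ B := by
  have h1 : interior A ⊆ B := by
    intro x hx
    by_contra hxB
    obtain ⟨r, hr, hball⟩ := Metric.isOpen_iff.1 hBcl.isOpen_compl x hxB
    obtain ⟨r', hr', hball'⟩ := Metric.isOpen_iff.1 isOpen_interior x hx
    have hsub : Metric.ball x (min r r') ⊆ A \ B := by
      intro y hy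
      exact ⟨interior_subset (hball' (ball_subset_ball (min_le_right _ _) hy)),
        hball (ball_subset_ball (min_le_left _ _) hy)⟩
    have hpos := measure_ball_pos volume x (lt_min hr hr')
    exact hpos.ne' (le_antisymm ((measure_mono hsub).trans_eq h) zero_le)
  intro x hx
  obtain ⟨y, hy⟩ := hAint
  have key : ∀ t : ℝ, t ∈ Set.Ioc (0:ℝ) 1 → t • y + (1 - t) • x ∈ B := by
    intro t ht
    exact h1 (hAconv.combo_interior_self_mem_interior hy hx ht.1 (by linarith [ht.2]) (by ring))
  have hten : Filter.Tendsto (fun t : ℝ => t • y + (1 - t) • x)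
      (nhdsWithin 0 (Set.Ioc (0:ℝ) 1)) (nhds x) := by
    have : Filter.Tendsto (fun t : ℝ => t • y + (1 - t) • x) (nhds 0) (nhds x) := by
      have hc : Continuous (fun t : ℝ => t • y + (1 - t) • x) := by continuity
      have := hc.tendsto 0
      simpa using this
    exact this.mono_left nhdsWithin_le_nhds
  have hne : (nhdsWithin (0:ℝ) (Set.Ioc (0:ℝ) 1)).NeBot := by
    apply mem_closure_iff_nhdsWithin_neBot.1
    rw [closure_Ioc one_ne_zero.symm]
    exact ⟨le_refl 0, zero_le_one⟩
  exact hBcl.mem_of_tendsto hten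
    (Filter.eventually_iff_exists_mem.2 ⟨Set.Ioc (0:ℝ) 1, self_mem_nhdsWithin,
      fun t ht => key t ht⟩)

lemma aux_integral_mvpoly {n : ℕ} {S : Set (EuclideanSpace ℝ (Fin n))}
    (hS : IsCompact S) (p : MvPolynomial (Fin n) ℝ) :
    ∫ x in S, MvPolynomial.eval (x : Fin n → ℝ) p
      = ∑ d ∈ p.support, MvPolynomial.coeff d p * geomMoment (fun i => d i) S := by
  have hint : ∀ d : Fin n →₀ ℕ, IntegrableOn
      (fun x : EuclideanSpace ℝ (Fin n) => MvPolynomial.coeff d p * ∏ i, (x i) ^ (d i)) S volume := by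
    intro d
    apply ContinuousOn.integrableOn_compact hS
    apply Continuous.continuousOn
    exact continuous_const.mul (continuous_finset_prod _ (fun i _ =>
      ((continuous_apply i).comp (PiLp.continuous_ofLp 2 _)).pow _))
  calc ∫ x in S, MvPolynomial.eval (x : Fin n → ℝ) p
      = ∫ x in S, ∑ d ∈ p.support, MvPolynomial.coeff d p * ∏ i, (x i) ^ (d i) := by
        refine setIntegral_congr_fun hS.measurableSet (fun x _ => ?_)
        rw [MvPolynomial.eval_eq']
    _ = ∑ d ∈ p.support, ∫ x in S, MvPolynomial.coeff d p * ∏ i, (x i) ^ (d i) :=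
        integral_finset_sum _ (fun d _ => hint d)
    _ = ∑ d ∈ p.support, MvPolynomial.coeff d p * geomMoment (fun i => d i) S := by
        refine Finset.sum_congr rfl (fun d _ => ?_)
        rw [MeasureTheory.integral_const_mul]; rfl

lemma aux_integral_eval_eq {n m : ℕ} {L S : Set (EuclideanSpace ℝ (Fin n))}
    (hL : IsCompact L) (hS : IsCompact S)
    (h : ∀ α : Fin n → ℕ, (∑ i, α i) ≤ m → geomMoment α L = geomMoment α S)
    (p : MvPolynomial (Fin n) ℝ) (hp : p.totalDegree ≤ m) :
    ∫ x in L, MvPolynomial.eval (x : Fin n → ℝ) p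
      = ∫ x in S, MvPolynomial.eval (x : Fin n → ℝ) p := by
  rw [aux_integral_mvpoly hL p, aux_integral_mvpoly hS p]
  refine Finset.sum_congr rfl (fun d hd => ?_)
  have hdeg : (∑ i, d i) ≤ m := by
    have h1 := MvPolynomial.le_totalDegree hd
    have h2 : d.sum (fun _ e => e) = ∑ i, d i := Finsupp.sum_fintype d _ (fun _ => rfl)
    omega
  rw [h _ hdeg]


-- bathtub: equality case
lemma aux_bathtub {n : ℕ} {q : EuclideanSpace ℝ (Fin n) → ℝ} (hq : Continuous q)
    {L : Set (EuclideanSpace ℝ (Fin n))} (hL : IsCompact L)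
    (hKm : IsCompact {x | q x ≤ 1})
    (hvol : volume L = volume {x | q x ≤ 1})
    (hint : ∫ x in L, (1 - q x) = ∫ x in {x | q x ≤ 1}, (1 - q x)) :
    volume (L \ {x | q x ≤ 1}) = 0 ∧ volume ({x | q x ≤ 1} \ L) = 0 := by
  set Km := {x : EuclideanSpace ℝ (Fin n) | q x ≤ 1} with hKmdef
  have hKmmeas : MeasurableSet Km := (isClosed_le hq continuous_const).measurableSet
  have hLmeas : MeasurableSet L := hL.isClosed.measurableSet
  set h : EuclideanSpace ℝ (Fin n) → ℝ := fun x => 1 - q x with hdef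
  have hhc : Continuous h := continuous_const.sub hq
  have hintL : IntegrableOn h L volume := hhc.continuousOn.integrableOn_compact hL
  have hintKm : IntegrableOn h Km volume := hhc.continuousOn.integrableOn_compact hKm
  -- split integrals
  have e1 : (∫ x in L ∩ Km, h x) + ∫ x in L \ Km, h x = ∫ x in L, h x :=
    integral_inter_add_diff hKmmeas hintL
  have e2 : (∫ x in Km ∩ L, h x) + ∫ x in Km \ L, h x = ∫ x in Km, h x :=
    integral_inter_add_diff hLmeas hintKm
  have e3 : ∫ x in L ∩ Km, h x = ∫ x in Km ∩ L, h x := by rw [Set.inter_comm]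
  have e4 : ∫ x in L \ Km, h x = ∫ x in Km \ L, h x := by
    have := hint
    rw [← e1, ← e2, e3] at this
    linarith
  have hA_nonpos : ∫ x in L \ Km, h x ≤ 0 := by
    apply setIntegral_nonpos (hLmeas.diff hKmmeas)
    intro x hx
    have : ¬ q x ≤ 1 := hx.2
    simp only [hdef]; linarith [not_le.1 this]
  have hB_nonneg : 0 ≤ ∫ x in Km \ L, h x := by
    apply setIntegral_nonneg (hKmmeas.diff hLmeas)
    intro x hx
    have : q x ≤ 1 := hx.1
    simp only [hdef]; linarith
  have hA0 : ∫ x in L \ Km, h x = 0 := le_antisymm hA_nonpos (e4 ▸ hB_nonneg)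
  -- strict negativity on L \ Km forces null
  have hAnull : volume (L \ Km) = 0 := by
    have hnonneg : 0 ≤ᵐ[volume.restrict (L \ Km)] fun x => -h x := by
      refine (ae_restrict_iff' (hLmeas.diff hKmmeas)).2 (Filter.Eventually.of_forall ?_)
      intro x hx
      have : ¬ q x ≤ 1 := hx.2
      simp only [hdef, Pi.zero_apply]; push_neg at this; linarith
    have hintA : IntegrableOn (fun x => -h x) (L \ Km) volume :=
      (hintL.mono_set Set.diff_subset).neg
    have hzero : ∫ x in L \ Km, -h x = 0 := by rw [integral_neg, hA0, neg_zero]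
    have := (setIntegral_eq_zero_iff_of_nonneg_ae hnonneg hintA).1 hzero
    -- a.e. zero but pointwise nonzero on the set
    have hsub : (L \ Km) ⊆ {x | ¬ ((fun x => -h x) x = (0 : ℝ))} := by
      intro x hx
      have : ¬ q x ≤ 1 := hx.2
      simp only [hdef, Set.mem_setOf_eq]
      push_neg at this
      intro hcontra
      nlinarith
    have h0 : volume.restrict (L \ Km) {x | ¬ ((fun x => -h x) x = (0:ℝ))} = 0 := this
    refine le_antisymm ?_ zero_le
    calc volume (L \ Km) = volume.restrict (L \ Km) (L \ Km) := by
          rw [Measure.restrict_apply_self]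
      _ ≤ volume.restrict (L \ Km) {x | ¬ ((fun x => -h x) x = (0:ℝ))} := measure_mono hsub
      _ = 0 := h0
  refine ⟨hAnull, ?_⟩
  -- volumes equal imply the other difference is null
  have v1 : volume (L ∩ Km) + volume (L \ Km) = volume L := measure_inter_add_diff L hKmmeas
  have v2 : volume (Km ∩ L) + volume (Km \ L) = volume Km := measure_inter_add_diff Km hLmeas
  rw [Set.inter_comm] at v2
  have hfin : volume (L ∩ Km) ≠ ⊤ :=
    (lt_of_le_of_lt (measure_mono Set.inter_subset_left) hL.measure_lt_top).ne
  have : volume (L ∩ Km) + volume (Km \ L) = volume (L ∩ Km) + volume (L \ Km) := by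
    rw [v2, v1, hvol]
  have := (ENNReal.add_right_inj hfin).1 this
  rw [this, hAnull]

section slab
variable {n : ℕ} {ι : Type} [Fintype ι]

/-- The slab-power function. -/
noncomputable def qfun (a : ι → Fin n → ℝ) (b : ι → ℝ) (k : ℕ)
    (x : EuclideanSpace ℝ (Fin n)) : ℝ :=
  ∑ i : ι, (b i + ∑ j, a i j * x j) ^ (2 * k)

lemma qfun_continuous (a : ι → Fin n → ℝ) (b : ι → ℝ) (k : ℕ) :
    Continuous (qfun a b k) := by
  apply continuous_finset_sum
  intro i _
  apply Continuous.pow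
  apply continuous_const.add
  apply continuous_finset_sum
  intro j _
  exact continuous_const.mul ((continuous_apply j).comp (PiLp.continuous_ofLp 2 _))

lemma qfun_convexOn (a : ι → Fin n → ℝ) (b : ι → ℝ) (k : ℕ) :
    ConvexOn ℝ Set.univ (qfun a b k) := by
  have : ∀ i : ι, ConvexOn ℝ Set.univ
      (fun x : EuclideanSpace ℝ (Fin n) => (b i + ∑ j, a i j * x j) ^ (2 * k)) := by
    intro i
    -- affine map
    let ℓ : EuclideanSpace ℝ (Fin n) →ₗ[ℝ] ℝ :=
      { toFun := fun x => ∑ j, a i j * x j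
        map_add' := by
          intro x y
          simp only [PiLp.add_apply]
          rw [← Finset.sum_add_distrib]
          congr 1; funext j; ring
        map_smul' := by
          intro c x
          simp only [PiLp.smul_apply, smul_eq_mul, RingHom.id_apply, Finset.mul_sum]
          congr 1; funext j; ring }
    let A : EuclideanSpace ℝ (Fin n) →ᵃ[ℝ] ℝ := ℓ.toAffineMap + AffineMap.const ℝ _ (b i)
    have hA : ∀ x, A x = b i + ∑ j, a i j * x j := by
      intro x
      show ℓ x + b i = _
      simp only [ℓ, LinearMap.coe_mk, AddHom.coe_mk]
      ring
    have hconv := ((Even.convexOn_pow (even_two_mul k)).comp_affineMap A)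
    have : (fun x : ℝ => x ^ (2*k)) ∘ A = fun x => (b i + ∑ j, a i j * x j) ^ (2*k) := by
      funext x; simp [Function.comp, hA x]
    rw [this] at hconv
    simpa using hconv
  -- sum of convex
  have : ConvexOn ℝ Set.univ (fun x : EuclideanSpace ℝ (Fin n) =>
      ∑ i ∈ (Finset.univ : Finset ι), (b i + ∑ j, a i j * x j) ^ (2 * k)) := by
    classical
    induction (Finset.univ : Finset ι) using Finset.cons_induction with
    | empty => simpa using convexOn_const (0:ℝ) convex_univ
    | cons i s hi ih =>
      simp only [Finset.sum_cons]
      exact (this i).add ih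
  exact this

/-- The polynomial corresponding to `qfun`. -/
noncomputable def qpoly (a : ι → Fin n → ℝ) (b : ι → ℝ) (k : ℕ) :
    MvPolynomial (Fin n) ℝ :=
  ∑ i : ι, (MvPolynomial.C (b i) + ∑ j, MvPolynomial.C (a i j) * MvPolynomial.X j) ^ (2 * k)

lemma qpoly_eval (a : ι → Fin n → ℝ) (b : ι → ℝ) (k : ℕ) (x : EuclideanSpace ℝ (Fin n)) :
    MvPolynomial.eval (x : Fin n → ℝ) (qpoly a b k) = qfun a b k x := by
  simp [qpoly, qfun]

lemma qpoly_totalDegree (a : ι → Fin n → ℝ) (b : ι → ℝ) (k : ℕ) :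
    (qpoly a b k).totalDegree ≤ 2 * k := by
  refine (MvPolynomial.totalDegree_finset_sum _ _).trans ?_
  refine Finset.sup_le (fun i _ => ?_)
  refine (MvPolynomial.totalDegree_pow _ _).trans ?_
  have h1 : (MvPolynomial.C (b i) + ∑ j, MvPolynomial.C (a i j) * MvPolynomial.X j :
      MvPolynomial (Fin n) ℝ).totalDegree ≤ 1 := by
    refine (MvPolynomial.totalDegree_add _ _).trans ?_
    refine max_le (by simp [MvPolynomial.totalDegree_C]) ?_
    refine (MvPolynomial.totalDegree_finset_sum _ _).trans ?_
    refine Finset.sup_le (fun j _ => ?_)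
    refine (MvPolynomial.totalDegree_mul _ _).trans ?_
    simp [MvPolynomial.totalDegree_C, MvPolynomial.totalDegree_X]
  calc 2 * k * (MvPolynomial.C (b i) + ∑ j, MvPolynomial.C (a i j) * MvPolynomial.X j :
      MvPolynomial (Fin n) ℝ).totalDegree ≤ 2 * k * 1 := Nat.mul_le_mul_left _ h1
    _ = 2 * k := by ring

end slab
lemma aux_coord_abs_le_norm {n : ℕ} (x : EuclideanSpace ℝ (Fin n)) (j : Fin n) :
    |x j| ≤ ‖x‖ := by
  rw [EuclideanSpace.norm_eq]
  have h2 : |x j| ^ 2 ≤ ∑ i, ‖x i‖ ^ 2 := by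
    have : |x j| ^ 2 = ‖x j‖ ^ 2 := by rw [Real.norm_eq_abs]
    rw [this]
    exact Finset.single_le_sum (f := fun i => ‖x i‖ ^ 2) (fun i _ => sq_nonneg _)
      (Finset.mem_univ j)
  calc |x j| = Real.sqrt (|x j| ^ 2) := by rw [Real.sqrt_sq (abs_nonneg _)]
    _ ≤ _ := Real.sqrt_le_sqrt h2

lemma aux_norm_le_of_coords {n : ℕ} (x : EuclideanSpace ℝ (Fin n)) {c : ℝ} (hc : 0 ≤ c)
    (h : ∀ j, |x j| ≤ c) : ‖x‖ ≤ Real.sqrt n * c := by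
  rw [EuclideanSpace.norm_eq]
  have h1 : ∑ i, ‖x i‖ ^ 2 ≤ (n : ℝ) * c ^ 2 := by
    calc ∑ i, ‖x i‖ ^ 2 ≤ ∑ _i : Fin n, c ^ 2 := by
          refine Finset.sum_le_sum (fun i _ => ?_)
          rw [Real.norm_eq_abs]
          exact pow_le_pow_left₀ (abs_nonneg _) (h i) 2
      _ = (n : ℝ) * c ^ 2 := by simp [mul_comm]
  calc Real.sqrt (∑ i, ‖x i‖ ^ 2) ≤ Real.sqrt ((n : ℝ) * c ^ 2) := Real.sqrt_le_sqrt h1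
    _ = Real.sqrt n * c := by
        rw [Real.sqrt_mul (Nat.cast_nonneg n), Real.sqrt_sq hc]

lemma aux_clm_decomp {n : ℕ} (f : EuclideanSpace ℝ (Fin n) →L[ℝ] ℝ)
    (x : EuclideanSpace ℝ (Fin n)) :
    f x = ∑ j, f (EuclideanSpace.single j 1) * x j := by
  have hx := (EuclideanSpace.basisFun (Fin n) ℝ).toBasis.sum_repr x
  simp only [OrthonormalBasis.coe_toBasis_repr_apply, EuclideanSpace.basisFun_repr,
    OrthonormalBasis.coe_toBasis, EuclideanSpace.basisFun_apply] at hx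
  conv_lhs => rw [← hx]
  rw [map_sum]
  exact Finset.sum_congr rfl (fun j _ => by rw [ContinuousLinearMap.map_smul]; simp [mul_comm])

lemma aux_construction {n : ℕ} (K C : Set (EuclideanSpace ℝ (Fin n)))
    (hKcomp : IsCompact K) (hKconv : Convex ℝ K) (hKne : K.Nonempty)
    (hCcomp : IsCompact C) (hKC : K ⊆ interior C) {ε : ℝ} (hε : 0 < ε) :
    ∃ (ι : Type) (_ : Fintype ι) (a : ι → Fin n → ℝ) (b : ι → ℝ) (k : ℕ),
      (∀ x ∈ K, qfun a b k x < 1) ∧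
      {x | qfun a b k x ≤ 1} ⊆ interior C ∧
      Bornology.IsBounded {x | qfun a b k x ≤ 1} ∧
      (∀ y, qfun a b k y ≤ 1 → ∃ z ∈ K, dist y z ≤ ε) := by
  classical
  -- thickening inside interior C
  obtain ⟨δ₀, hδ₀pos, hδ₀⟩ := hKcomp.exists_thickening_subset_open isOpen_interior hKC
  set δ : ℝ := min δ₀ ε with hδdef
  have hδpos : 0 < δ := lt_min hδ₀pos hε
  have hδε : δ ≤ ε := min_le_right _ _
  have hthick : Metric.thickening δ K ⊆ interior C :=
    (Metric.thickening_mono (min_le_left _ _) K).trans hδ₀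
  -- radius bounds
  obtain ⟨R, hRpos, hCR⟩ := hCcomp.isBounded.subset_closedBall_lt 0 0
  have hKR : K ⊆ Metric.closedBall 0 R := fun x hx => hCR (interior_subset (hKC hx))
  set R₂ : ℝ := Real.sqrt n * (R + 1) with hR₂def
  have hR₂nonneg : 0 ≤ R₂ := mul_nonneg (Real.sqrt_nonneg _) (by linarith)
  have hKR₂ : ∀ x ∈ K, ‖x‖ ≤ R₂ := by
    intro x hx
    refine aux_norm_le_of_coords x (by linarith) (fun j => ?_)
    have h1 : ‖x‖ ≤ R := by simpa using hKR hx
    linarith [aux_coord_abs_le_norm x j]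
  -- the compact set of "bad" points
  set T : Set (EuclideanSpace ℝ (Fin n)) :=
    Metric.closedBall 0 R₂ ∩ {z | δ ≤ Metric.infDist z K} with hTdef
  have hTcomp : IsCompact T := by
    refine (isCompact_closedBall 0 R₂).inter_right ?_
    exact isClosed_le continuous_const (Metric.continuous_infDist_pt K)
  -- separation
  have hsep : ∀ z ∈ T, ∃ (f : EuclideanSpace ℝ (Fin n) →L[ℝ] ℝ) (u v : ℝ),
      (∀ w ∈ K, f w < u) ∧ u < v ∧ v < f z := by
    intro z hz
    have hzK : z ∉ K := by
      intro hzk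
      have h0 : Metric.infDist z K = 0 := Metric.infDist_zero_of_mem hzk
      have := hz.2
      rw [Set.mem_setOf_eq] at this
      rw [h0] at this
      linarith
    obtain ⟨f, u, v, h1, h2, h3⟩ := geometric_hahn_banach_compact_closed hKconv hKcomp
      (convex_singleton z) isClosed_singleton (Set.disjoint_singleton_right.2 hzK)
    exact ⟨f, u, v, h1, h2, h3 z rfl⟩
  choose! F U V hFU hUV hVF using hsep
  -- finite subcover
  have hTsub : T ⊆ ⋃ z : T, {w | V z < F z w} := by
    intro z hz
    exact Set.mem_iUnion.2 ⟨⟨z, hz⟩, hVF z hz⟩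
  obtain ⟨s, hs⟩ := hTcomp.elim_finite_subcover (fun z : T => {w | V (z : _) < F (z : _) w})
    (fun z => isOpen_lt continuous_const (F (z : _)).continuous) hTsub
  -- maxima of the functionals on K
  have hmax : ∀ z : EuclideanSpace ℝ (Fin n), ∃ sK : ℝ,
      (∀ x ∈ K, F z x ≤ sK) ∧ (∃ x₀ ∈ K, F z x₀ = sK) := by
    intro z
    obtain ⟨x₀, hx₀K, hx₀⟩ := hKcomp.exists_isMaxOn hKne (F z).continuous.continuousOn
    exact ⟨F z x₀, fun x hx => hx₀ hx, x₀, hx₀K, rfl⟩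
  choose SK hSKle hSKmem using hmax
  have hSKlt : ∀ z ∈ T, SK z < U z := by
    intro z hz
    obtain ⟨x₀, hx₀K, hx₀⟩ := hSKmem z
    rw [← hx₀]
    exact hFU z hz x₀ hx₀K
  -- normalization constants
  set M : EuclideanSpace ℝ (Fin n) → ℝ := fun z => ‖F z‖ * R₂ + |U z| + 1 with hMdef
  set den : EuclideanSpace ℝ (Fin n) → ℝ := fun z => U z + M z with hdendef
  have hden : ∀ z, 1 ≤ den z := by
    intro z
    have h1 : 0 ≤ ‖F z‖ * R₂ := mul_nonneg (norm_nonneg _) hR₂nonneg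
    have h2 : 0 ≤ U z + |U z| := by cases abs_cases (U z) <;> linarith [abs_nonneg (U z)]
    simp only [hdendef, hMdef]
    linarith
  have hdenpos : ∀ z, 0 < den z := fun z => lt_of_lt_of_le one_pos (hden z)
  -- index type and slab data
  set ι : Type := {z : T // z ∈ s} ⊕ Fin n with hιdef
  set a : ι → Fin n → ℝ := fun i => match i with
    | Sum.inl z => fun j => 2 * F (z : _) (EuclideanSpace.single j 1) / den (z : _)
    | Sum.inr j => fun j' => if j = j' then 1 / (R + 1) else 0
    with hadef
  set b : ι → ℝ := fun i => match i with
    | Sum.inl z => (M (z : _) - U (z : _)) / den (z : _)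
    | Sum.inr _ => 0
    with hbdef
  -- slab values
  have hslab_inl : ∀ (z : {z : T // z ∈ s}) (x : EuclideanSpace ℝ (Fin n)),
      b (Sum.inl z) + ∑ j, a (Sum.inl z) j * x j
        = (2 * F (z : _) x + (M (z : _) - U (z : _))) / den (z : _) := by
    intro z x
    simp only [hadef, hbdef]
    rw [aux_clm_decomp (F (z : _)) x]
    rw [Finset.mul_sum, add_div]
    rw [add_comm]
    congr 1
    rw [Finset.sum_div]
    refine Finset.sum_congr rfl (fun j _ => by ring)
  have hslab_inr : ∀ (j : Fin n) (x : EuclideanSpace ℝ (Fin n)),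
      b (Sum.inr j) + ∑ j', a (Sum.inr j) j' * x j' = x j / (R + 1) := by
    intro j x
    simp only [hadef, hbdef, zero_add, ite_mul, zero_mul]
    rw [Finset.sum_ite_eq (Finset.univ : Finset (Fin n)) j (fun j' => 1 / (R+1) * x j')]
    simp [Finset.mem_univ]
    ring
  -- margin bounds
  set θ : ι → NNReal := fun i => match i with
    | Sum.inl z => Real.toNNReal (max ((2 * SK (z : _) + (M (z : _) - U (z : _))) / den (z : _))
        ((2 * ‖F (z : _)‖ * R₂ - (M (z : _) - U (z : _))) / den (z : _)))
    | Sum.inr _ => Real.toNNReal (R / (R + 1))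
    with hθdef
  have hθlt : ∀ i : ι, θ i < 1 := by
    intro i
    have h1 : (1 : NNReal) = Real.toNNReal 1 := by simp
    match i with
    | Sum.inl z =>
      simp only [hθdef]
      rw [h1, Real.toNNReal_lt_toNNReal_iff one_pos]
      have hzT : ((z : T) : EuclideanSpace ℝ (Fin n)) ∈ T := (z : T).2
      refine max_lt ?_ ?_
      · rw [div_lt_one (hdenpos _)]
        have := hSKlt _ hzT
        simp only [hdendef]
        linarith
      · rw [div_lt_one (hdenpos _)]
        simp only [hdendef, hMdef]
        have : 0 ≤ |U ((z : T) : EuclideanSpace ℝ (Fin n))| := abs_nonneg _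
        linarith
    | Sum.inr j =>
      simp only [hθdef]
      rw [h1, Real.toNNReal_lt_toNNReal_iff one_pos]
      rw [div_lt_one (by linarith : (0:ℝ) < R + 1)]
      linarith
  set τ : NNReal := Finset.univ.sup θ with hτdef
  have hτlt : τ < 1 := by
    rw [hτdef]
    exact (Finset.sup_lt_iff (by norm_num : (⊥ : NNReal) < 1)).2 (fun i _ => hθlt i)
  have hτltR : (τ : ℝ) < 1 := by exact_mod_cast hτlt
  have hθτ : ∀ i : ι, ((θ i : NNReal) : ℝ) ≤ (τ : ℝ) := by
    intro i
    exact_mod_cast Finset.le_sup (Finset.mem_univ i)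
  -- bound of slabs on K
  have hKbound : ∀ x ∈ K, ∀ i : ι, |b i + ∑ j, a i j * x j| ≤ (τ : ℝ) := by
    intro x hx i
    match i with
    | Sum.inl z =>
      rw [hslab_inl]
      have hzT : ((z : T) : EuclideanSpace ℝ (Fin n)) ∈ T := (z : T).2
      set w : EuclideanSpace ℝ (Fin n) := ((z : T) : EuclideanSpace ℝ (Fin n)) with hwdef
      have hFabs : |F w x| ≤ ‖F w‖ * R₂ := by
        calc |F w x| ≤ ‖F w‖ * ‖x‖ := (F w).le_opNorm x
          _ ≤ ‖F w‖ * R₂ := mul_le_mul_of_nonneg_left (hKR₂ x hx) (norm_nonneg _)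
      have hup : F w x ≤ SK w := hSKle w x hx
      have hlo : -(‖F w‖ * R₂) ≤ F w x := neg_le_of_abs_le hFabs
      have hθval : max ((2 * SK w + (M w - U w)) / den w)
          ((2 * ‖F w‖ * R₂ - (M w - U w)) / den w) ≤ (τ : ℝ) := by
        refine le_trans ?_ (hθτ (Sum.inl z))
        simp only [hθdef]
        exact Real.le_coe_toNNReal _
      rw [abs_le]
      constructor
      · have h1 : -((2 * ‖F w‖ * R₂ - (M w - U w)) / den w)
            ≤ (2 * F w x + (M w - U w)) / den w := by
          rw [← neg_div]
          refine div_le_div_of_nonneg_right ?_ (hdenpos w).le |>.trans_eq rfl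
          linarith
        have h2 : (2 * ‖F w‖ * R₂ - (M w - U w)) / den w
            ≤ max ((2 * SK w + (M w - U w)) / den w)
              ((2 * ‖F w‖ * R₂ - (M w - U w)) / den w) := le_max_right _ _
        have := neg_le_neg (h2.trans hθval)
        linarith
      · have h1 : (2 * F w x + (M w - U w)) / den w
            ≤ (2 * SK w + (M w - U w)) / den w := by
          refine div_le_div_of_nonneg_right ?_ (hdenpos w).le |>.trans_eq rfl
          linarith
        refine h1.trans ((le_max_left _ _).trans hθval)
    | Sum.inr j =>
      rw [hslab_inr]
      have hxR : ‖x‖ ≤ R := by simpa using hKR hx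
      have hxj : |x j| ≤ R := (aux_coord_abs_le_norm x j).trans hxR
      have h1 : |x j / (R + 1)| = |x j| / (R + 1) := by
        rw [abs_div, abs_of_pos (by linarith : (0:ℝ) < R + 1)]
      rw [h1]
      refine le_trans ?_ ((le_trans (Real.le_coe_toNNReal _) (hθτ (Sum.inr j))))
      exact div_le_div_of_nonneg_right hxj (by linarith)
  -- choose k
  set N : ℕ := Fintype.card ι with hNdef
  obtain ⟨k₀, hk₀⟩ : ∃ k₀ : ℕ, (τ : ℝ) ^ k₀ < 1 / (N + 1) := by
    have ht := tendsto_pow_atTop_nhds_zero_of_lt_one τ.coe_nonneg hτltR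
    have : ∀ᶠ j in Filter.atTop, (τ : ℝ) ^ j < 1 / (N + 1) :=
      ht.eventually (gt_mem_nhds (by positivity))
    exact this.exists
  set k : ℕ := max k₀ 1 with hkdef
  have hk1 : 1 ≤ k := le_max_right _ _
  have hτ2k : (τ : ℝ) ^ (2 * k) ≤ (τ : ℝ) ^ k₀ :=
    pow_le_pow_of_le_one τ.coe_nonneg hτltR.le (by omega)
  refine ⟨ι, inferInstance, a, b, k, ?_, ?_, ?_, ?_⟩
  · -- K inside the open sublevel set
    intro x hx
    have hterm : ∀ i : ι, (b i + ∑ j, a i j * x j) ^ (2 * k) ≤ (τ : ℝ) ^ (2 * k) := by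
      intro i
      have h1 := hKbound x hx i
      calc (b i + ∑ j, a i j * x j) ^ (2 * k)
          = |b i + ∑ j, a i j * x j| ^ (2 * k) := ((even_two_mul k).pow_abs _).symm
        _ ≤ (τ : ℝ) ^ (2 * k) := pow_le_pow_left₀ (abs_nonneg _) h1 _
    calc qfun a b k x ≤ ∑ _i : ι, (τ : ℝ) ^ (2 * k) :=
          Finset.sum_le_sum (fun i _ => hterm i)
      _ = (N : ℝ) * (τ : ℝ) ^ (2 * k) := by
          rw [Finset.sum_const, Finset.card_univ, nsmul_eq_mul, hNdef]
      _ ≤ (N : ℝ) * (τ : ℝ) ^ k₀ :=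
          mul_le_mul_of_nonneg_left hτ2k (Nat.cast_nonneg _)
      _ ≤ (N : ℝ) * (1 / (N + 1)) :=
          mul_le_mul_of_nonneg_left hk₀.le (Nat.cast_nonneg _)
      _ < 1 := by
          rw [mul_one_div, div_lt_one (by positivity)]
          linarith
  all_goals {
    have hkey : ∀ y : EuclideanSpace ℝ (Fin n), qfun a b k y ≤ 1 →
        (∀ i : ι, |b i + ∑ j, a i j * y j| ≤ 1) := by
      intro y hy i
      have hnn : ∀ i' : ι, 0 ≤ (b i' + ∑ j, a i' j * y j) ^ (2 * k) :=
        fun i' => (even_two_mul k).pow_nonneg _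
      have hterm : (b i + ∑ j, a i j * y j) ^ (2 * k) ≤ 1 := by
        refine le_trans ?_ hy
        exact Finset.single_le_sum (f := fun i' : ι => (b i' + ∑ j, a i' j * y j) ^ (2 * k))
          (fun i' _ => hnn i') (Finset.mem_univ i)
      have habs : |b i + ∑ j, a i j * y j| ^ (2 * k) ≤ 1 := by
        rw [(even_two_mul k).pow_abs]; exact hterm
      exact (pow_le_one_iff_of_nonneg (abs_nonneg _) (by omega)).1 habs
    have hball : ∀ y : EuclideanSpace ℝ (Fin n), qfun a b k y ≤ 1 → ‖y‖ ≤ R₂ := by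
      intro y hy
      refine aux_norm_le_of_coords y (by linarith) (fun j => ?_)
      have := hkey y hy (Sum.inr j)
      rw [hslab_inr] at this
      have h1 : |y j / (R + 1)| = |y j| / (R + 1) := by
        rw [abs_div, abs_of_pos (by linarith : (0:ℝ) < R + 1)]
      rw [h1, div_le_one (by linarith : (0:ℝ) < R + 1)] at this
      linarith
    have hinf : ∀ y : EuclideanSpace ℝ (Fin n), qfun a b k y ≤ 1 →
        Metric.infDist y K < δ := by
      intro y hy
      by_contra hcon
      push_neg at hcon
      have hyT : y ∈ T := by
        refine ⟨?_, hcon⟩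
        rw [Metric.mem_closedBall, dist_zero_right]
        exact hball y hy
      have := hs hyT
      rw [Set.mem_iUnion] at this
      obtain ⟨z, hz⟩ := this
      rw [Set.mem_iUnion] at hz
      obtain ⟨hzs, hzy⟩ := hz
      have hVy : V ((z : T) : EuclideanSpace ℝ (Fin n)) <
          F ((z : T) : EuclideanSpace ℝ (Fin n)) y := hzy
      set w : EuclideanSpace ℝ (Fin n) := ((z : T) : EuclideanSpace ℝ (Fin n)) with hwdef
      have hUV' : U w < V w := hUV w (z : T).2
      have hslab := hkey y hy (Sum.inl ⟨z, hzs⟩)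
      rw [hslab_inl] at hslab
      have h2 : (1 : ℝ) < (2 * F w y + (M w - U w)) / den w := by
        rw [lt_div_iff₀ (hdenpos w)]
        simp only [hdendef]
        linarith
      have h3 := le_abs_self ((2 * F w y + (M w - U w)) / den w)
      simp only [hwdef] at hslab h2 h3
      linarith
    first
    | exact fun y hy => hthick ((Metric.mem_thickening_iff_infDist_lt hKne).2 (hinf y hy))
    | { refine (Metric.isBounded_closedBall (x := (0 : EuclideanSpace ℝ (Fin n)))
          (r := R₂)).subset ?_
        intro y hy
        rw [Metric.mem_closedBall, dist_zero_right]
        exact hball y hy }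
    | { intro y hy
        have := (Metric.infDist_lt_iff hKne).1 (hinf y hy)
        obtain ⟨z, hzK, hdz⟩ := this
        exact ⟨z, hzK, le_trans hdz.le hδε⟩ }
  }

end AuxProof


/-- Convex bodies in `C` that are uniquely determined (among convex bodies
in `C`) by finitely many moments are dense: for `K ⊆ int C` and `ε > 0` there are `m ∈ ℕ`
and a convex body `K_m ⊆ C`, uniquely determined among convex bodies in `C` by its moments
of order at most `m`, with `d_H(K, K_m) ≤ ε`. -/
theorem dense_uniquely_determined_in_C {n : ℕ}
    (K C : Set (EuclideanSpace ℝ (Fin n))) (hK : IsConvexBody K) (hC : IsConvexBody C)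
    (hKC : K ⊆ interior C) (ε : ℝ) (hε : 0 < ε) :
    ∃ (m : ℕ) (Km : Set (EuclideanSpace ℝ (Fin n))),
      Km ⊆ C ∧ IsConvexBody Km ∧
      (∀ L : Set (EuclideanSpace ℝ (Fin n)), IsConvexBody L → L ⊆ C →
        (∀ α : Fin n → ℕ, (∑ i, α i) ≤ m → geomMoment α L = geomMoment α Km) → L = Km) ∧
      Metric.hausdorffDist K Km ≤ ε := by
  obtain ⟨hKcomp, hKconv, hKint⟩ := hK
  obtain ⟨hCcomp, hCconv, hCint⟩ := hC
  have hKne : K.Nonempty := hKint.mono interior_subset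
  obtain ⟨ι, hι, a, b, k, h1, h2, h3, h4⟩ :=
    aux_construction K C hKcomp hKconv hKne hCcomp hKC hε
  letI := hι
  set Km : Set (EuclideanSpace ℝ (Fin n)) := {x | qfun a b k x ≤ 1} with hKmdef
  have hq : Continuous (qfun a b k) := qfun_continuous a b k
  have hKmclosed : IsClosed Km := isClosed_le hq continuous_const
  have hKmcomp : IsCompact Km := Metric.isCompact_of_isClosed_isBounded hKmclosed h3
  have hKKm : K ⊆ Km := fun x hx => le_of_lt (h1 x hx)
  have hKmC : Km ⊆ C := fun x hx => interior_subset (h2 hx)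
  have hKmconv : Convex ℝ Km := by
    have h := (qfun_convexOn a b k).convex_le 1
    have he : {x : EuclideanSpace ℝ (Fin n) | x ∈ Set.univ ∧ qfun a b k x ≤ 1} = Km := by
      ext x; simp [hKmdef]
    rwa [he] at h
  have hKmint : (interior Km).Nonempty := by
    obtain ⟨x, hx⟩ := hKne
    refine ⟨x, mem_interior.2 ⟨{y | qfun a b k y < 1}, ?_,
      isOpen_lt hq continuous_const, h1 x hx⟩⟩
    intro y hy
    simp only [Set.mem_setOf_eq] at hy ⊢
    exact hy.le
  refine ⟨2 * k, Km, hKmC, ⟨hKmcomp, hKmconv, hKmint⟩, ?_, ?_⟩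
  · intro L hL hLC hmom
    obtain ⟨hLcomp, hLconv, hLint⟩ := hL
    have hvol : volume L = volume Km := by
      have h0 := hmom (fun _ => 0) (by simp)
      simp only [geomMoment, pow_zero, Finset.prod_const_one] at h0
      rw [setIntegral_const, setIntegral_const, smul_eq_mul, smul_eq_mul,
        mul_one, mul_one] at h0
      exact (ENNReal.toReal_eq_toReal_iff' hLcomp.measure_lt_top.ne
        hKmcomp.measure_lt_top.ne).1 h0
    have hqint : ∫ x in L, qfun a b k x = ∫ x in Km, qfun a b k x := by
      have h := aux_integral_eval_eq hLcomp hKmcomp hmom (qpoly a b k)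
        (qpoly_totalDegree a b k)
      simpa only [qpoly_eval] using h
    have hintL : IntegrableOn (qfun a b k) L volume :=
      hq.continuousOn.integrableOn_compact hLcomp
    have hintKm : IntegrableOn (qfun a b k) Km volume :=
      hq.continuousOn.integrableOn_compact hKmcomp
    have hconstL : IntegrableOn (fun _ : EuclideanSpace ℝ (Fin n) => (1:ℝ)) L volume :=
      integrableOn_const hLcomp.measure_lt_top.ne
    have hconstKm : IntegrableOn (fun _ : EuclideanSpace ℝ (Fin n) => (1:ℝ)) Km volume :=
      integrableOn_const hKmcomp.measure_lt_top.ne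
    have hsubint : ∫ x in L, (1 - qfun a b k x) = ∫ x in Km, (1 - qfun a b k x) := by
      rw [integral_sub hconstL hintL, integral_sub hconstKm hintKm, hqint]
      congr 1
      rw [setIntegral_const, setIntegral_const, smul_eq_mul, smul_eq_mul, mul_one, mul_one,
        measureReal_def, measureReal_def, hvol]
    obtain ⟨hA, hB⟩ := aux_bathtub hq hLcomp hKmcomp hvol hsubint
    have hLKm : L ⊆ Km := aux_subset_of_null_diff hLconv hLcomp.isClosed hLint hKmclosed hA
    have hKmL : Km ⊆ L :=
      aux_subset_of_null_diff hKmconv hKmclosed hKmint hLcomp.isClosed hB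
    exact Set.Subset.antisymm hLKm hKmL
  · refine Metric.hausdorffDist_le_of_mem_dist hε.le (fun x hx => ⟨x, hKKm hx, ?_⟩)
      (fun y hy => ?_)
    · simp [dist_self]; linarith
    · obtain ⟨z, hzK, hdz⟩ := h4 y hy
      exact ⟨z, hzK, hdz⟩
end

section
/- Let K be a convex body in ℝⁿ. For every ε > 0 there exist m ∈ ℕ and a convex body K_m ⊂ ℝⁿ such that (i) K_m is uniquely determined among all convex bodies in ℝⁿ by its geometric moments of order at most m (any convex body L ⊂ ℝⁿ with μ_α(L) = μ_α(K_m) for all |α| ≤ m equals K_m), and (ii) the Hausdorff distance between K and K_m is at most ε. -/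
open MeasureTheory

open Metric Set MvPolynomial Filter

section helpers

variable {n : ℕ}

/-- A convex body is contained in any closed set from which it differs by a null set. -/
lemma body_subset_of_diff_null {L M : Set (EuclideanSpace ℝ (Fin n))}
    (hL : IsConvexBody L) (hM : IsClosed M) (h : volume (L \ M) = 0) : L ⊆ M := by
  obtain ⟨hLc, hLconv, hLint⟩ := hL
  have hint : interior L ⊆ M := by
    intro x hx
    by_contra hxM
    have hopen : IsOpen (interior L \ M) := isOpen_interior.sdiff hM
    have hne : (interior L \ M).Nonempty := ⟨x, hx, hxM⟩
    have hpos := hopen.measure_pos volume hne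
    have h0 : volume (interior L \ M) = 0 :=
      measure_mono_null (Set.diff_subset_diff_left interior_subset) h
    exact absurd h0 hpos.ne'
  have hcl : L ⊆ closure (interior L) := by
    intro x hx
    obtain ⟨y, hy⟩ := hLint
    have hseq : ∀ k : ℕ, x + ((1:ℝ)/(k+1)) • (y - x) ∈ interior L := by
      intro k
      refine hLconv.add_smul_sub_mem_interior hx hy ⟨by positivity, ?_⟩
      rw [div_le_one (by positivity)]
      linarith [Nat.cast_nonneg (α := ℝ) k]
    have htend : Filter.Tendsto (fun k : ℕ => x + ((1:ℝ)/(k+1)) • (y - x))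
        Filter.atTop (nhds x) := by
      have h1 : Filter.Tendsto (fun k : ℕ => (1:ℝ)/(k+1)) Filter.atTop (nhds 0) :=
        tendsto_one_div_add_atTop_nhds_zero_nat
      have := (h1.smul_const (y - x)).const_add x
      simpa using this
    exact mem_closure_of_tendsto htend (Filter.Eventually.of_forall hseq)
  calc L ⊆ closure (interior L) := hcl
    _ ⊆ closure M := closure_mono hint
    _ = M := hM.closure_eq

/-- Two convex bodies with null symmetric difference are equal. -/
lemma body_eq_of_symmDiff_null {L M : Set (EuclideanSpace ℝ (Fin n))}
    (hL : IsConvexBody L) (hM : IsConvexBody M)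
    (h1 : volume (L \ M) = 0) (h2 : volume (M \ L) = 0) : L = M :=
  subset_antisymm (body_subset_of_diff_null hL hM.1.isClosed h1)
    (body_subset_of_diff_null hM hL.1.isClosed h2)

lemma integrableOn_monomial {L : Set (EuclideanSpace ℝ (Fin n))} (hL : IsCompact L)
    (α : Fin n → ℕ) (c : ℝ) :
    IntegrableOn (fun x : EuclideanSpace ℝ (Fin n) => c * ∏ i, (x i) ^ (α i)) L := by
  apply ContinuousOn.integrableOn_compact hL
  exact (continuous_const.mul
    (continuous_finset_prod _ fun i _ => (PiLp.continuous_apply 2 _ i).pow _)).continuousOn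

lemma setIntegral_poly_eq_sum_moments {L : Set (EuclideanSpace ℝ (Fin n))} (hL : IsCompact L)
    (p : MvPolynomial (Fin n) ℝ) :
    ∫ x in L, eval (fun i => x i) p =
      ∑ d ∈ p.support, p.coeff d * geomMoment (fun i => d i) L := by
  calc ∫ x in L, eval (fun i => x i) p
      = ∫ x in L, ∑ d ∈ p.support, p.coeff d * ∏ i, (x i) ^ (d i) := by
        refine setIntegral_congr_fun (hL.isClosed.measurableSet) fun x _ => ?_
        exact eval_eq' _ p
    _ = ∑ d ∈ p.support, ∫ x in L, p.coeff d * ∏ i, (x i) ^ (d i) :=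
        integral_finset_sum _ fun d _ => integrableOn_monomial hL _ _
    _ = ∑ d ∈ p.support, p.coeff d * geomMoment (fun i => d i) L := by
        refine Finset.sum_congr rfl fun d _ => ?_
        rw [geomMoment, integral_const_mul]

lemma integral_eval_eq_of_moments {m : ℕ} {L M : Set (EuclideanSpace ℝ (Fin n))}
    (hL : IsCompact L) (hM : IsCompact M)
    (hmom : ∀ α : Fin n → ℕ, (∑ i, α i) ≤ m → geomMoment α L = geomMoment α M)
    {p : MvPolynomial (Fin n) ℝ} (hdeg : p.totalDegree ≤ m) :
    ∫ x in L, eval (fun i => x i) p = ∫ x in M, eval (fun i => x i) p := by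
  rw [setIntegral_poly_eq_sum_moments hL, setIntegral_poly_eq_sum_moments hM]
  refine Finset.sum_congr rfl fun d hd => ?_
  rw [hmom _ ?_]
  have h1 : (∑ i, d i) = d.sum fun _ e => e :=
    (Finsupp.sum_fintype _ (fun _ e => e) fun _ => rfl).symm
  rw [h1]
  exact le_trans (le_totalDegree hd) hdeg

/-- The bathtub principle: a sublevel-set convex body is determined by its volume and the
integral of the defining function. -/
lemma bathtub {q : EuclideanSpace ℝ (Fin n) → ℝ} (hq : Continuous q) {c : ℝ}
    {L M : Set (EuclideanSpace ℝ (Fin n))} (hL : IsConvexBody L) (hM : IsConvexBody M)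
    (hMdef : M = {x | q x ≤ c}) (hvol : volume L = volume M)
    (hint : ∫ x in L, q x = ∫ x in M, q x) : L = M := by
  have mL : MeasurableSet L := hL.1.isClosed.measurableSet
  have mM : MeasurableSet M := hM.1.isClosed.measurableSet
  have hiL : IntegrableOn (fun x => q x - c) L :=
    ((hq.sub continuous_const).continuousOn).integrableOn_compact hL.1
  have hiM : IntegrableOn (fun x => q x - c) M :=
    ((hq.sub continuous_const).continuousOn).integrableOn_compact hM.1
  have hiLq : IntegrableOn q L := hq.continuousOn.integrableOn_compact hL.1
  have hiMq : IntegrableOn q M := hq.continuousOn.integrableOn_compact hM.1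
  have hIL : ∫ x in L, (q x - c) = (∫ x in L, q x) - (volume L).toReal * c := by
    rw [integral_sub hiLq (integrableOn_const hL.1.measure_lt_top.ne)]
    rw [setIntegral_const, smul_eq_mul, Measure.real]
  have hIM : ∫ x in M, (q x - c) = (∫ x in M, q x) - (volume M).toReal * c := by
    rw [integral_sub hiMq (integrableOn_const hM.1.measure_lt_top.ne)]
    rw [setIntegral_const, smul_eq_mul, Measure.real]
  have hdiff : ∫ x in L, (q x - c) = ∫ x in M, (q x - c) := by
    rw [hIL, hIM, hint, hvol]
  have hsplitL : ∫ x in L, (q x - c) =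
      (∫ x in L ∩ M, (q x - c)) + ∫ x in L \ M, (q x - c) :=
    (integral_inter_add_diff mM hiL).symm
  have hsplitM : ∫ x in M, (q x - c) =
      (∫ x in L ∩ M, (q x - c)) + ∫ x in M \ L, (q x - c) := by
    rw [Set.inter_comm L M]
    exact (integral_inter_add_diff mL hiM).symm
  set a := ∫ x in L \ M, (q x - c) with ha_def
  set b := ∫ x in M \ L, (q x - c) with hb_def
  have hab : a = b := by
    rw [hsplitL, hsplitM] at hdiff
    linarith
  have ha0 : 0 ≤ a := by
    refine setIntegral_nonneg (mL.diff mM) fun x hx => ?_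
    have hxM : ¬ q x ≤ c := by
      have := hx.2
      rw [hMdef] at this
      exact this
    linarith [not_le.mp hxM]
  have hb0 : b ≤ 0 := by
    refine setIntegral_nonpos (mM.diff mL) fun x hx => ?_
    have hxM : q x ≤ c := by
      have := hx.1
      rw [hMdef] at this
      exact this
    linarith
  have ha : a = 0 := le_antisymm (hab ▸ hb0) ha0
  have hnull1 : volume (L \ M) = 0 := by
    by_contra hne
    have hpos : 0 < volume (L \ M) := pos_iff_ne_zero.mpr hne
    have hqpos : ∀ x ∈ L \ M, 0 < q x - c := by
      intro x hx
      have hxM : ¬ q x ≤ c := by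
        have := hx.2
        rw [hMdef] at this
        exact this
      linarith [not_le.mp hxM]
    have hsupp : Function.support (fun x => q x - c) ∩ (L \ M) = L \ M := by
      refine Set.inter_eq_right.mpr fun x hx => ?_
      exact ne_of_gt (hqpos x hx)
    have key := (setIntegral_pos_iff_support_of_nonneg_ae
      (μ := volume) (s := L \ M) (f := fun x => q x - c)
      ((ae_restrict_iff' (mL.diff mM)).mpr (Filter.Eventually.of_forall
        fun x hx => (hqpos x hx).le))
      (hiL.mono_set Set.diff_subset)).mpr (by rw [hsupp]; exact hpos)
    rw [← ha_def] at key
    exact absurd (ha ▸ key) (lt_irrefl 0)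
  have hnull2 : volume (M \ L) = 0 := by
    have h1 : volume (L ∩ M) + volume (L \ M) = volume L := measure_inter_add_diff L mM
    have h2 : volume (M ∩ L) + volume (M \ L) = volume M := measure_inter_add_diff M mL
    rw [Set.inter_comm M L] at h2
    rw [hnull1, add_zero] at h1
    rw [h1, ← hvol] at h2
    have hLfin : volume L ≠ ⊤ := hL.1.measure_lt_top.ne
    nth_rewrite 2 [← add_zero (volume L)] at h2
    exact (ENNReal.add_right_inj hLfin).mp h2
  exact body_eq_of_symmDiff_null hL hM hnull1 hnull2

lemma convexOn_finset_sum {ι : Type*} (t : Finset ι)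
    {f : ι → EuclideanSpace ℝ (Fin n) → ℝ}
    (h : ∀ j ∈ t, ConvexOn ℝ Set.univ (f j)) :
    ConvexOn ℝ Set.univ (fun x => ∑ j ∈ t, f j x) := by
  classical
  induction t using Finset.induction_on with
  | empty => simpa using convexOn_const (0:ℝ) convex_univ
  | @insert j s hj ih =>
    simp only [Finset.sum_insert hj]
    exact (h j (Finset.mem_insert_self _ _)).add
      (ih fun i hi => h i (Finset.mem_insert_of_mem hi))

lemma repr_euclidean (x : EuclideanSpace ℝ (Fin n)) :
    x = ∑ i, x i • EuclideanSpace.single i (1:ℝ) := by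
  ext i
  simp [EuclideanSpace.single_apply, Pi.single_apply]

lemma clm_repr (f : EuclideanSpace ℝ (Fin n) →L[ℝ] ℝ) (x : EuclideanSpace ℝ (Fin n)) :
    f x = ∑ i, x i * f (EuclideanSpace.single i 1) := by
  conv_lhs => rw [repr_euclidean x]
  rw [map_sum]
  simp [smul_eq_mul]

end helpers

/-- The convex bodies uniquely determined among all convex bodies in `ℝⁿ`
by finitely many geometric moments form a dense subset of all convex bodies: for every
convex body `K` and `ε > 0` there are `m ∈ ℕ` and a convex body `K_m`, uniquely determined
among all convex bodies by its moments of order at most `m`, with `d_H(K, K_m) ≤ ε`. -/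
theorem dense_uniquely_determined {n : ℕ}
    (K : Set (EuclideanSpace ℝ (Fin n))) (hK : IsConvexBody K) (ε : ℝ) (hε : 0 < ε) :
    ∃ (m : ℕ) (Km : Set (EuclideanSpace ℝ (Fin n))),
      IsConvexBody Km ∧
      (∀ L : Set (EuclideanSpace ℝ (Fin n)), IsConvexBody L →
        (∀ α : Fin n → ℕ, (∑ i, α i) ≤ m → geomMoment α L = geomMoment α Km) → L = Km) ∧
      Metric.hausdorffDist K Km ≤ ε := by
  classical
  obtain ⟨hKc, hKconv, hKint⟩ := hK
  have hKne : K.Nonempty := hKint.mono interior_subset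
  -- the shell of points at distance exactly ε from K
  set S : Set (EuclideanSpace ℝ (Fin n)) := {x | infDist x K = ε} with hS_def
  have hthick_bdd : Bornology.IsBounded {x : EuclideanSpace ℝ (Fin n) | infDist x K ≤ ε} := by
    have hsub : {x : EuclideanSpace ℝ (Fin n) | infDist x K ≤ ε} ⊆ cthickening ε K := by
      intro x hx
      rw [mem_cthickening_iff]
      have hne : Metric.infEDist x K ≠ ⊤ := Metric.infEDist_ne_top hKne
      rw [← ENNReal.ofReal_toReal hne]
      exact ENNReal.ofReal_le_ofReal hx
    exact (hKc.isBounded.cthickening).subset hsub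
  have hScomp : IsCompact S := by
    apply isCompact_of_isClosed_isBounded
    · exact isClosed_eq (continuous_infDist_pt K) continuous_const
    · exact hthick_bdd.subset fun x hx => le_of_eq hx
  have hsep : ∀ x ∈ S, ∃ (f : (EuclideanSpace ℝ (Fin n)) →L[ℝ] ℝ) (u : ℝ),
      (∀ a ∈ K, f a < u) ∧ u < f x := by
    intro x hx
    have hxK : x ∉ K := by
      intro hmem
      have : infDist x K = 0 := infDist_zero_of_mem hmem
      rw [hS_def] at hx
      simp only [Set.mem_setOf_eq] at hx
      linarith [hx ▸ this]
    exact geometric_hahn_banach_closed_point hKconv hKc.isClosed hxK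
  choose! F U hF1 hF2 using hsep
  -- finite subcover of the shell
  have hcov : S ⊆ ⋃ x ∈ S, {y | U x < F x y} := by
    intro x hx
    exact Set.mem_biUnion hx (hF2 x hx)
  obtain ⟨b', hb'S, hb'fin, hb'cov⟩ := hScomp.elim_finite_subcover_image
    (fun x _ => isOpen_lt continuous_const (F x).continuous) hcov
  set J : Finset (EuclideanSpace ℝ (Fin n)) := hb'fin.toFinset with hJ_def
  have hJS : ∀ j ∈ J, j ∈ S := fun j hj => hb'S (hb'fin.mem_toFinset.mp hj)
  -- maximizers over K
  have hmax : ∀ j : EuclideanSpace ℝ (Fin n), ∃ z ∈ K, ∀ y ∈ K, F j y ≤ F j z := by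
    intro j
    obtain ⟨z, hz, hmax⟩ := hKc.exists_isMaxOn hKne (F j).continuous.continuousOn
    exact ⟨z, hz, fun y hy => hmax hy⟩
  choose zm hzm1 hzm2 using hmax
  have habs : ∀ j : EuclideanSpace ℝ (Fin n), ∃ z ∈ K, ∀ y ∈ K, |F j y| ≤ |F j z| := by
    intro j
    obtain ⟨z, hz, hmax⟩ := hKc.exists_isMaxOn hKne ((F j).continuous.abs).continuousOn
    exact ⟨z, hz, fun y hy => hmax hy⟩
  choose za hza1 hza2 using habs
  set δ : ℝ := if h : J.Nonempty then J.inf' h (fun j => U j - F j (zm j)) else 1 with hδ_def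
  have hδpos : 0 < δ := by
    rw [hδ_def]
    split_ifs with h
    · rw [Finset.lt_inf'_iff]
      intro j hj
      have := hF1 j (hJS j hj) (zm j) (hzm1 j)
      linarith
    · norm_num
  have hδle : ∀ j ∈ J, ∀ y ∈ K, F j y ≤ U j - δ := by
    intro j hj y hy
    have h1 : F j y ≤ F j (zm j) := hzm2 j y hy
    have h2 : δ ≤ U j - F j (zm j) := by
      rw [hδ_def]
      rw [dif_pos ⟨j, hj⟩]
      exact Finset.inf'_le _ hj
    linarith
  set M : ℝ := 1 + δ + ∑ j ∈ J, (|F j (za j)| + |U j|) with hM_def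
  have hsum_nonneg : (0:ℝ) ≤ ∑ j ∈ J, (|F j (za j)| + |U j|) :=
    Finset.sum_nonneg fun j _ => by positivity
  have hM0 : 0 < M := by rw [hM_def]; linarith
  have hMj : ∀ j ∈ J, |F j (za j)| + |U j| ≤ M - 1 - δ := by
    intro j hj
    have h := Finset.single_le_sum (f := fun j => |F j (za j)| + |U j|)
      (fun i _ => by positivity) hj
    rw [hM_def]; linarith
  have hFabs : ∀ j ∈ J, ∀ y ∈ K, |F j y| ≤ M := by
    intro j hj y hy
    have h1 := hza2 j y hy
    have h2 := hMj j hj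
    have h3 : (0:ℝ) ≤ |U j| := abs_nonneg _
    linarith
  have hUabs : ∀ j ∈ J, |U j| ≤ M := by
    intro j hj
    have h2 := hMj j hj
    have h3 : (0:ℝ) ≤ |F j (za j)| := abs_nonneg _
    linarith
  set cc : EuclideanSpace ℝ (Fin n) → ℝ := fun j => (U j - δ - M)/2 with hcc_def
  set rr : EuclideanSpace ℝ (Fin n) → ℝ := fun j => (U j - δ + M)/2 with hrr_def
  have hrpos : ∀ j ∈ J, (1:ℝ)/2 ≤ rr j := by
    intro j hj
    have h1 := hUabs j hj
    have h2 : -(M) ≤ U j := neg_le_of_abs_le h1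
    rw [hrr_def]
    simp only
    have hMge : 1 + δ ≤ M := by
      have := hMj j hj
      have h3 : (0:ℝ) ≤ |F j (za j)| := abs_nonneg _
      have h4 : (0:ℝ) ≤ |U j| := abs_nonneg _
      linarith
    have h5 : -|U j| ≤ U j := neg_abs_le _
    have h6 : |U j| ≤ M - 1 - δ := by
      have := hMj j hj
      have h3 : (0:ℝ) ≤ |F j (za j)| := abs_nonneg _
      linarith
    linarith
  have hrposs : ∀ j ∈ J, (0:ℝ) < rr j := fun j hj => lt_of_lt_of_le (by norm_num) (hrpos j hj)
  have hrleM : ∀ j ∈ J, rr j ≤ M := by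
    intro j hj
    have h1 : U j ≤ |U j| := le_abs_self _
    have h2 := hUabs j hj
    rw [hrr_def]
    simp only
    linarith
  set k : ℕ := J.card with hk_def
  obtain ⟨N₀, hN₀⟩ := pow_unbounded_of_one_lt ((k:ℝ) + 1/2)
    (show (1:ℝ) < 1 + δ/M by
      have : 0 < δ/M := div_pos hδpos hM0
      linarith)
  set N : ℕ := N₀ + 1 with hN_def
  have hpow : ((k:ℝ) + 1/2) < (1 + δ/M)^(2*N) := by
    refine lt_of_lt_of_le hN₀ (pow_le_pow_right₀ ?_ ?_)
    · have : 0 < δ/M := div_pos hδpos hM0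
      linarith
    · omega
  set tt : EuclideanSpace ℝ (Fin n) → EuclideanSpace ℝ (Fin n) → ℝ :=
    fun j x => (F j x - cc j)/rr j with htt_def
  set q : EuclideanSpace ℝ (Fin n) → ℝ := fun x => ∑ j ∈ J, (tt j x)^(2*N) with hq_def
  set c : ℝ := (k:ℝ) + 1/2 with hc_def
  have hqcont : Continuous q := by
    rw [hq_def]
    refine continuous_finset_sum _ fun j _ => ?_
    exact (((F j).continuous.sub continuous_const).div_const _).pow _
  -- on K every t_j lies in [-1,1]
  have hK_t : ∀ j ∈ J, ∀ y ∈ K, |tt j y| ≤ 1 := by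
    intro j hj y hy
    have h1 : F j y ≤ U j - δ := hδle j hj y hy
    have h2 : -M ≤ F j y := neg_le_of_abs_le (hFabs j hj y hy)
    have h3 : 0 < rr j := hrposs j hj
    have hsum : cc j + rr j = U j - δ := by simp only [hcc_def, hrr_def]; ring
    have hdiffm : cc j - rr j = -M := by simp only [hcc_def, hrr_def]; ring
    rw [htt_def]
    simp only
    rw [abs_div, abs_of_pos h3, div_le_one h3, abs_le]
    constructor <;> linarith
  have hKq : ∀ y ∈ K, q y ≤ (k:ℝ) := by
    intro y hy
    rw [hq_def]
    simp only
    calc ∑ j ∈ J, (tt j y)^(2*N) ≤ ∑ j ∈ J, 1 := by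
          refine Finset.sum_le_sum fun j hj => ?_
          have h1 : |tt j y| ≤ 1 := hK_t j hj y hy
          calc (tt j y)^(2*N) = |tt j y|^(2*N) := by
                rw [← abs_pow, abs_of_nonneg]
                rw [pow_mul]
                exact pow_nonneg (sq_nonneg _) _
            _ ≤ 1 := pow_le_one₀ (abs_nonneg _) h1
      _ = (k:ℝ) := by rw [Finset.sum_const, hk_def]; simp
  set Km : Set (EuclideanSpace ℝ (Fin n)) := {x | q x ≤ c} with hKm_def
  have hKopen : K ⊆ {x | q x < c} := by
    intro y hy
    have := hKq y hy
    rw [Set.mem_setOf_eq, hc_def]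
    linarith
  have hKsubKm : K ⊆ Km := fun y hy => show q y ≤ c from le_of_lt (hKopen hy)
  set P : Set (EuclideanSpace ℝ (Fin n)) := {x | ∀ j ∈ J, F j x ≤ U j} with hP_def
  have hKmP : Km ⊆ P := by
    intro x hx j hj
    have hx' : q x ≤ c := hx
    have hterm : (tt j x)^(2*N) ≤ c := by
      refine le_trans ?_ hx'
      rw [hq_def]
      simp only
      refine Finset.single_le_sum (f := fun j => (tt j x)^(2*N)) (fun i _ => ?_) hj
      show (0:ℝ) ≤ tt i x ^ (2*N)
      rw [pow_mul]; exact pow_nonneg (sq_nonneg _) _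
    have habs_le : |tt j x| ≤ 1 + δ/M := by
      refine le_of_pow_le_pow_left₀ (by omega : 2*N ≠ 0) ?_ ?_
      · have : 0 < δ/M := div_pos hδpos hM0
        linarith
      · calc |tt j x|^(2*N) = (tt j x)^(2*N) := by
              rw [← abs_pow, abs_of_nonneg]
              rw [pow_mul]; exact pow_nonneg (sq_nonneg _) _
          _ ≤ c := hterm
          _ ≤ (1 + δ/M)^(2*N) := le_of_lt (hc_def ▸ hpow)
    have h3 : 0 < rr j := hrposs j hj
    have h4 : tt j x ≤ 1 + δ/M := le_trans (le_abs_self _) habs_le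
    have h5 : δ/M ≤ δ/rr j := by
      apply div_le_div_of_nonneg_left hδpos.le h3 (hrleM j hj)
    have h6 : tt j x ≤ 1 + δ/rr j := by linarith
    have h7 : F j x - cc j ≤ rr j + δ := by
      have := mul_le_mul_of_nonneg_right h6 h3.le
      rw [htt_def] at this
      simp only at this
      rw [div_mul_cancel₀ _ (ne_of_gt h3)] at this
      rw [add_mul, one_mul, div_mul_cancel₀ _ (ne_of_gt h3)] at this
      linarith
    have h8 : cc j + rr j = U j - δ := by
      rw [hcc_def, hrr_def]; ring
    linarith
  have hPconv : Convex ℝ P := by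
    rw [hP_def]
    have : P = ⋂ j ∈ J, {x : EuclideanSpace ℝ (Fin n) | F j x ≤ U j} := by
      ext x; simp [hP_def]
    rw [← hP_def, this]
    refine convex_iInter fun j => convex_iInter fun _ => ?_
    exact convex_halfSpace_le ⟨(F j).map_add, fun c x => (F j).map_smul c x⟩ _
  have hKP : K ⊆ P := by
    intro y hy j hj
    have := hδle j hj y hy
    linarith
  have hPS : ∀ x ∈ S, x ∉ P := by
    intro x hxS hxP
    obtain ⟨j, hjmem, hjlt⟩ := Set.mem_iUnion₂.mp (hb'cov hxS)
    have hjJ : j ∈ J := hb'fin.mem_toFinset.mpr hjmem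
    have : F j x ≤ U j := hxP j hjJ
    rw [Set.mem_setOf_eq] at hjlt
    linarith
  have hPsub : P ⊆ {x | infDist x K ≤ ε} := by
    intro z hz
    by_contra hcon
    rw [Set.mem_setOf_eq, not_le] at hcon
    obtain ⟨y, hy⟩ := hKne
    set g : ℝ → ℝ := fun t => infDist ((1-t) • y + t • z) K with hg_def
    have hgcont : Continuous g := by
      apply (continuous_infDist_pt K).comp
      exact ((continuous_const.sub continuous_id).smul continuous_const).add
        (continuous_id.smul continuous_const)
    have hg0 : g 0 = 0 := by
      rw [hg_def]; simp [infDist_zero_of_mem hy]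
    have hg1 : ε < g 1 := by
      rw [hg_def]; simpa using hcon
    have hmem : ε ∈ Set.Icc (g 0) (g 1) := ⟨by rw [hg0]; exact hε.le, hg1.le⟩
    obtain ⟨t, ht01, hgt⟩ := intermediate_value_Icc (by norm_num : (0:ℝ) ≤ 1)
      hgcont.continuousOn hmem
    set w : EuclideanSpace ℝ (Fin n) := (1-t) • y + t • z with hw_def
    have hwP : w ∈ P := by
      have := hPconv (hKP hy) hz (by linarith [ht01.2] : (0:ℝ) ≤ 1 - t) ht01.1
        (by ring : (1 - t) + t = 1)
      exact this
    have hwS : w ∈ S := by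
      rw [hS_def, Set.mem_setOf_eq]
      exact hgt
    exact hPS w hwS hwP
  -- Km is a convex body
  have hKmclosed : IsClosed Km := isClosed_le hqcont continuous_const
  have hKmbdd : Bornology.IsBounded Km := hthick_bdd.subset fun x hx => hPsub (hKmP hx)
  have hKmcomp : IsCompact Km := isCompact_of_isClosed_isBounded hKmclosed hKmbdd
  have hKmconv : Convex ℝ Km := by
    have hterm : ∀ j : EuclideanSpace ℝ (Fin n),
        ConvexOn ℝ Set.univ fun x => (tt j x)^(2*N) := by
      intro j
      have hpowc : ConvexOn ℝ Set.univ fun z : ℝ => z^(2*N) :=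
        Even.convexOn_pow (even_two_mul N)
      refine ⟨convex_univ, fun x _ y _ a b ha hb hab => ?_⟩
      have haff : tt j (a • x + b • y) = a * tt j x + b * tt j y := by
        simp only [htt_def, map_add, _root_.map_smul, smul_eq_mul]
        have h9 : a * ((F j x - cc j)/rr j) + b * ((F j y - cc j)/rr j)
            = ((a * F j x + b * F j y) - (a+b) * cc j)/rr j := by ring
        rw [h9, hab, one_mul]
      have hle := hpowc.2 (Set.mem_univ (tt j x)) (Set.mem_univ (tt j y)) ha hb hab
      simp only [smul_eq_mul] at hle ⊢
      rw [haff]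
      exact hle
    have hconvq : ConvexOn ℝ Set.univ q := by
      rw [hq_def]
      exact convexOn_finset_sum J fun j _ => hterm j
    have h10 := hconvq.convex_le c
    simpa [hKm_def, Set.sep_univ] using h10
  have hKmint : (interior Km).Nonempty := by
    have hopen : IsOpen {x : EuclideanSpace ℝ (Fin n) | q x < c} :=
      isOpen_lt hqcont continuous_const
    have hsub : {x : EuclideanSpace ℝ (Fin n) | q x < c} ⊆ Km := fun x hx =>
      show q x ≤ c from le_of_lt hx
    obtain ⟨y, hy⟩ := hKne
    exact ⟨y, (hopen.subset_interior_iff.mpr hsub) (hKopen hy)⟩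
  -- the defining polynomial
  set p : MvPolynomial (Fin n) ℝ := ∑ j ∈ J,
    ((∑ i, MvPolynomial.C (F j (EuclideanSpace.single i 1) / rr j) * MvPolynomial.X i)
      + MvPolynomial.C (- cc j / rr j))^(2*N) with hp_def
  have heval : ∀ x : EuclideanSpace ℝ (Fin n), eval (fun i => x i) p = q x := by
    intro x
    rw [hp_def, hq_def]
    simp only [map_sum, map_add, map_pow, map_mul, eval_C, eval_X]
    refine Finset.sum_congr rfl fun j hj => ?_
    congr 1
    rw [htt_def]
    simp only
    rw [clm_repr (F j) x]
    calc (∑ i, F j (EuclideanSpace.single i 1) / rr j * x i) + - cc j / rr j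
        = (∑ i, x i * F j (EuclideanSpace.single i 1) / rr j) + - (cc j / rr j) := by
          rw [neg_div]
          exact congrArg₂ (· + ·)
            (Finset.sum_congr rfl fun i _ => by ring) rfl
      _ = (∑ i, x i * F j (EuclideanSpace.single i 1)) / rr j - cc j / rr j := by
          rw [Finset.sum_div, sub_eq_add_neg]
      _ = ((∑ i, x i * F j (EuclideanSpace.single i 1)) - cc j) / rr j := by
          rw [sub_div]
  have hdeg : p.totalDegree ≤ 2*N := by
    rw [hp_def]
    refine le_trans (totalDegree_finset_sum _ _) (Finset.sup_le fun j hj => ?_)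
    refine le_trans (totalDegree_pow _ _) ?_
    have h1 : ((∑ i, MvPolynomial.C (F j (EuclideanSpace.single i 1) / rr j) * MvPolynomial.X i)
        + MvPolynomial.C (- cc j / rr j)).totalDegree ≤ 1 := by
      refine le_trans (totalDegree_add _ _) (max_le ?_ ?_)
      · refine le_trans (totalDegree_finset_sum _ _) (Finset.sup_le fun i _ => ?_)
        refine le_trans (totalDegree_mul _ _) ?_
        rw [totalDegree_C]
        simp [totalDegree_X (R := ℝ) i]
      · simp [totalDegree_C]
    exact le_trans (Nat.mul_le_mul_left (2*N) h1) (le_of_eq (mul_one _))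
  refine ⟨2*N, Km, ⟨hKmcomp, hKmconv, hKmint⟩, ?_, ?_⟩
  · intro L hLbody hmom
    have hvolL : volume L = volume Km := by
      have h0 := hmom (fun _ => 0) (by simp)
      have hL0 : geomMoment (fun _ => 0) L = (volume L).toReal := by
        simp [geomMoment, Measure.real]
      have hK0 : geomMoment (fun _ => 0) Km = (volume Km).toReal := by
        simp [geomMoment, Measure.real]
      rw [hL0, hK0] at h0
      exact (ENNReal.toReal_eq_toReal_iff' hLbody.1.measure_lt_top.ne
        hKmcomp.measure_lt_top.ne).mp h0
    have hintq : ∫ x in L, q x = ∫ x in Km, q x := by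
      have h11 := integral_eval_eq_of_moments hLbody.1 hKmcomp hmom hdeg
      simp only [heval] at h11
      exact h11
    exact bathtub hqcont hLbody ⟨hKmcomp, hKmconv, hKmint⟩ hKm_def hvolL hintq
  · refine hausdorffDist_le_of_infDist hε.le ?_ ?_
    · intro x hx
      rw [infDist_zero_of_mem (hKsubKm hx)]
      exact hε.le
    · intro x hx
      exact hPsub (hKmP hx)
end
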